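/- arXiv:2504.04577 — 3 statements merged into one kernel-verified Lean document; each statement's English description precedes it below -/
import Mathlib

section
/- Let I be a school matching instance. The map M ↦ R_M is a lattice isomorphism from the lattice of stable matchings (S(I),≥) onto the lattice of upper-closed subsets of the rotation poset (R(I),⊵) ordered by reverse inclusion. In particular: (i) for every M∈S(I), the set R_M is upper-closed; (ii) for every upper-closed R⊆R(I) there exists a (unique) stable matching M_R with R_{M_R}=R; and (iii) for all M,M'∈S(I), R_{M∧M'} = R_M ∪ R_{M'} and R_{M∨M'} = R_M ∩ R_{M'}. -/
open Classical
open scoped ENNReal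

noncomputable section

namespace SM

/-- A school matching instance: students `A`, schools `B`, strict preference
orders over the other side plus the outside option `∅` (encoded as `none`),
and quotas `q b ≤ |A|`. -/
structure SchoolInstance (A B : Type) [Fintype A] [Fintype B] where
  prefA : A → Option B → Option B → Prop
  prefB : B → Option A → Option A → Prop
  prefA_sto : ∀ a, IsStrictTotalOrder (Option B) (prefA a)
  prefB_sto : ∀ b, IsStrictTotalOrder (Option A) (prefB b)
  q : B → ℕ
  q_le : ∀ b, q b ≤ Fintype.card A

variable {A B : Type} [Fintype A] [Fintype B] [DecidableEq A] [DecidableEq B]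

/-- A matching: every student is assigned a school or the outside option, and
each school receives at most `q b` students.  (A school is implicitly paired
with the outside option exactly when it has strictly fewer than `q b`
students, and a student is paired with the outside option exactly when it has
no school; this determines the set of pairs of the matching.) -/
structure Matching {A B : Type} [Fintype A] [Fintype B] (I : SchoolInstance A B) where
  toFun : A → Option B
  quota : ∀ b : B, (Finset.univ.filter fun a => toFun a = some b).card ≤ I.q b

instance (I : SchoolInstance A B) : Nonempty (Matching I) := by
  refine ⟨⟨fun _ => none, fun b => ?_⟩⟩
  have h : (Finset.univ.filter fun _ : A => (none : Option B) = some b) = ∅ :=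
    Finset.filter_false_of_mem (by intro a _; simp)
  rw [h, Finset.card_empty]
  exact Nat.zero_le _

/-- The students assigned to school `b`. -/
def assignedTo (I : SchoolInstance A B) (M : Matching I) (b : B) : Finset A :=
  Finset.univ.filter fun a => M.toFun a = some b

/-- School `b` has strictly fewer than `q b` students, i.e. is also paired
with the outside option. -/
def hasSlack (I : SchoolInstance A B) (M : Matching I) (b : B) : Prop :=
  (assignedTo I M b).card < I.q b

/-- `x ∈ M(b)`: the partners of school `b` (students assigned to it, plus the
outside option when it is under quota). -/
def inPartners (I : SchoolInstance A B) (M : Matching I) (b : B) (x : Option A) : Prop :=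
  (∃ a : A, x = some a ∧ M.toFun a = some b) ∨ (x = none ∧ hasSlack I M b)

/-- `M(b)` as a set. -/
def partnersSet (I : SchoolInstance A B) (M : Matching I) (b : B) : Set (Option A) :=
  {x | inPartners I M b x}

/-- The pair `ab` blocks `M`. -/
def BlocksPair (I : SchoolInstance A B) (M : Matching I) (a : A) (b : B) : Prop :=
  I.prefA a (some b) (M.toFun a) ∧ ∃ x, inPartners I M b x ∧ I.prefB b (some a) x

/-- Student `a` blocks `M` (prefers the outside option to its partner). -/
def BlocksStudent (I : SchoolInstance A B) (M : Matching I) (a : A) : Prop :=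
  I.prefA a none (M.toFun a)

/-- School `b` blocks `M` (prefers the outside option to one of its partners). -/
def BlocksSchool (I : SchoolInstance A B) (M : Matching I) (b : B) : Prop :=
  ∃ a : A, M.toFun a = some b ∧ I.prefB b none (some a)

/-- Stability: no blocking pair and no blocking agent. -/
def Stable (I : SchoolInstance A B) (M : Matching I) : Prop :=
  (¬ ∃ a b, BlocksPair I M a b) ∧ (¬ ∃ a, BlocksStudent I M a) ∧ (¬ ∃ b, BlocksSchool I M b)

/-- `M ≥ M'`: every student weakly prefers `M` to `M'`. -/
def matGE (I : SchoolInstance A B) (M M' : Matching I) : Prop :=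
  ∀ a : A, M.toFun a = M'.toFun a ∨ I.prefA a (M.toFun a) (M'.toFun a)

/-- `M' < M` in the student order. -/
def matLT (I : SchoolInstance A B) (M' M : Matching I) : Prop :=
  matGE I M M' ∧ M'.toFun ≠ M.toFun

/-- `M'` is an immediate predecessor of `M` in `(S(I), ≥)`. -/
def ImmPred (I : SchoolInstance A B) (M' M : Matching I) : Prop :=
  Stable I M' ∧ Stable I M ∧ matLT I M' M ∧
    ¬ ∃ M'' : Matching I, Stable I M'' ∧ matLT I M' M'' ∧ matLT I M'' M

/-- The type in which rotations live: pairs `(ρ₊, ρ₋)` of sets of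
student/school pairs (with the outside option allowed on either side). -/
abbrev Rot (A B : Type) : Type :=
  Finset (Option A × Option B) × Finset (Option A × Option B)

/-- The set of pairs of a matching: each student with its partner, and each
under-quota school with the outside option. -/
def pairsOf (I : SchoolInstance A B) (M : Matching I) : Finset (Option A × Option B) :=
  Finset.univ.filter fun p =>
    (∃ a : A, p = (some a, M.toFun a)) ∨ (∃ b : B, hasSlack I M b ∧ p = (none, some b))

/-- The rotation `ρ(M, M') = (M ∖ M', M' ∖ M)`. -/
def rho (I : SchoolInstance A B) (M M' : Matching I) : Rot A B :=
  (pairsOf I M \ pairsOf I M', pairsOf I M' \ pairsOf I M)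

/-- `R(I)`: the set of all rotations of `I`. -/
def RotSet (I : SchoolInstance A B) : Set (Rot A B) :=
  {r | ∃ M M' : Matching I, ImmPred I M' M ∧ r = rho I M M'}

/-- `c` is a maximal chain of stable matchings from `M0` down to `M`:
consecutive entries are immediate predecessors. -/
def chainTo (I : SchoolInstance A B) (M0 M : Matching I) (c : List (Matching I)) : Prop :=
  c.head? = some M0 ∧ c.getLast? = some M ∧ (∀ N ∈ c, Stable I N) ∧
    List.Chain' (fun X Y => ImmPred I Y X) c

/-- The set of rotations eliminated along the chain `c`. -/
def chainRots (I : SchoolInstance A B) (c : List (Matching I)) : Set (Rot A B) :=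
  {r | ∃ (i : ℕ) (X Y : Matching I), getElem? c i = some X ∧ getElem? c (i + 1) = some Y ∧ r = rho I X Y}

/-- `ρ` is exposed in `M`. -/
def Exposed (I : SchoolInstance A B) (r : Rot A B) (M : Matching I) : Prop :=
  ∃ M', ImmPred I M' M ∧ r = rho I M M'

/-- The rotation poset `ρ ⊵ ρ'` (relative to the rotation-set map `RM`):
either `ρ = ρ'`, or `ρ ∈ R_M` for every stable `M` in which `ρ'` is exposed. -/
def domRel (I : SchoolInstance A B) (RM : Matching I → Set (Rot A B)) (r r' : Rot A B) : Prop :=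
  r = r' ∨ ∀ M, Stable I M → Exposed I r' M → r ∈ RM M

/-- `ρ ▷ ρ'`. -/
def strictDom (I : SchoolInstance A B) (RM : Matching I → Set (Rot A B)) (r r' : Rot A B) : Prop :=
  domRel I RM r r' ∧ r ≠ r'

/-- `R ⊆ R(I)` is upper-closed in the rotation poset. -/
def UpperClosed (I : SchoolInstance A B) (RM : Matching I → Set (Rot A B))
    (R : Set (Rot A B)) : Prop :=
  R ⊆ RotSet I ∧ ∀ r' ∈ R, ∀ r ∈ RotSet I, domRel I RM r r' → r ∈ R

/-- `N` is the join `M ∨ M'` (least upper bound) in `(S(I), ≥)`. -/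
def IsJoin (I : SchoolInstance A B) (M M' N : Matching I) : Prop :=
  Stable I N ∧ matGE I N M ∧ matGE I N M' ∧
    ∀ P, Stable I P → matGE I P M → matGE I P M' → matGE I P N

/-- `N` is the meet `M ∧ M'` (greatest lower bound) in `(S(I), ≥)`. -/
def IsMeet (I : SchoolInstance A B) (M M' N : Matching I) : Prop :=
  Stable I N ∧ matGE I M N ∧ matGE I M' N ∧
    ∀ P, Stable I P → matGE I M P → matGE I M' P → matGE I N P

/-- `F` is a (nonempty) sublattice of the lattice of stable matchings. -/
def IsSublattice (I : SchoolInstance A B) (F : Set (Matching I)) : Prop :=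
  F.Nonempty ∧ (∀ M ∈ F, Stable I M) ∧
    (∀ M ∈ F, ∀ M' ∈ F, ∃ N ∈ F, IsJoin I M M' N) ∧
    (∀ M ∈ F, ∀ M' ∈ F, ∃ N ∈ F, IsMeet I M M' N)

/-- `ρ ~ ρ'`: the two rotations are eliminated together in every matching of `F`. -/
def rotEquiv (I : SchoolInstance A B) (RM : Matching I → Set (Rot A B))
    (F : Set (Matching I)) (r r' : Rot A B) : Prop :=
  ∀ M ∈ F, (r ∈ RM M ↔ r' ∈ RM M)

/-- The trivial meta-rotation `θ₀^F` of rotations eliminated in every matching of `F`. -/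
def theta0 (I : SchoolInstance A B) (RM : Matching I → Set (Rot A B))
    (F : Set (Matching I)) : Set (Rot A B) :=
  {r | r ∈ RotSet I ∧ ∀ M ∈ F, r ∈ RM M}

/-- The trivial meta-rotation `θ_z^F` of rotations eliminated in no matching of `F`. -/
def thetaZ (I : SchoolInstance A B) (RM : Matching I → Set (Rot A B))
    (F : Set (Matching I)) : Set (Rot A B) :=
  {r | r ∈ RotSet I ∧ ∀ M ∈ F, r ∉ RM M}

/-- `θ` is a meta-rotation of `F` (an equivalence class of `~`). -/
def IsMetaRot (I : SchoolInstance A B) (RM : Matching I → Set (Rot A B))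
    (F : Set (Matching I)) (θ : Set (Rot A B)) : Prop :=
  ∃ r ∈ RotSet I, θ = {r' | r' ∈ RotSet I ∧ rotEquiv I RM F r r'}

/-- `θ` is a proper meta-rotation of `F`. -/
def IsProperMeta (I : SchoolInstance A B) (RM : Matching I → Set (Rot A B))
    (F : Set (Matching I)) (θ : Set (Rot A B)) : Prop :=
  IsMetaRot I RM F θ ∧ θ ≠ theta0 I RM F ∧ θ ≠ thetaZ I RM F

/-- `θ ⊵^F θ'` on (proper) meta-rotations. -/
def metaDom (I : SchoolInstance A B) (RM : Matching I → Set (Rot A B))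
    (F : Set (Matching I)) (θ θ' : Set (Rot A B)) : Prop :=
  ∀ M ∈ F, θ' ⊆ RM M → θ ⊆ RM M

/-- `Θ_M`: the set of proper meta-rotations contained in `R_M`. -/
def ThetaM (I : SchoolInstance A B) (RM : Matching I → Set (Rot A B))
    (F : Set (Matching I)) (M : Matching I) : Set (Set (Rot A B)) :=
  {θ | IsProperMeta I RM F θ ∧ θ ⊆ RM M}

/-- `Θ` is an upper-closed set of proper meta-rotations. -/
def UCProper (I : SchoolInstance A B) (RM : Matching I → Set (Rot A B))
    (F : Set (Matching I)) (Θ : Set (Set (Rot A B))) : Prop :=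
  (∀ θ ∈ Θ, IsProperMeta I RM F θ) ∧
    ∀ θ' ∈ Θ, ∀ θ, IsProperMeta I RM F θ → metaDom I RM F θ θ' → θ ∈ Θ

/-- `M_R`: the stable matching whose rotation set is `R` (via definite description). -/
def MofR (I : SchoolInstance A B) (RM : Matching I → Set (Rot A B))
    (R : Set (Rot A B)) : Matching I :=
  Classical.epsilon fun M => Stable I M ∧ RM M = R

/-- `R^θ = θ₀^F ∪ ⋃ {θ' proper : θ' ⊵^F θ}`. -/
def Rup (I : SchoolInstance A B) (RM : Matching I → Set (Rot A B))
    (F : Set (Matching I)) (θ : Set (Rot A B)) : Set (Rot A B) :=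
  theta0 I RM F ∪ ⋃₀ {θ' | IsProperMeta I RM F θ' ∧ metaDom I RM F θ' θ}

/-- `R_θ = θ₀^F ∪ ⋃ {θ' proper : θ' ▷^F θ}`. -/
def Rdn (I : SchoolInstance A B) (RM : Matching I → Set (Rot A B))
    (F : Set (Matching I)) (θ : Set (Rot A B)) : Set (Rot A B) :=
  theta0 I RM F ∪ ⋃₀ {θ' | IsProperMeta I RM F θ' ∧ metaDom I RM F θ' θ ∧ θ' ≠ θ}

/-- `M^θ`. -/
def Mup (I : SchoolInstance A B) (RM : Matching I → Set (Rot A B))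
    (F : Set (Matching I)) (θ : Set (Rot A B)) : Matching I :=
  MofR I RM (Rup I RM F θ)

/-- `M_θ`. -/
def Mdn (I : SchoolInstance A B) (RM : Matching I → Set (Rot A B))
    (F : Set (Matching I)) (θ : Set (Rot A B)) : Matching I :=
  MofR I RM (Rdn I RM F θ)

/-- The meet `M ∧ M'` in the lattice of stable matchings (via definite description). -/
def meetM (I : SchoolInstance A B) (M M' : Matching I) : Matching I :=
  Classical.epsilon fun N => IsMeet I M M' N

/-- First order differential `∂f_θ = f(M^θ) − f(M_θ)`. -/
def d1 (I : SchoolInstance A B) (RM : Matching I → Set (Rot A B))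
    (F : Set (Matching I)) (f : Matching I → ℝ) (θ : Set (Rot A B)) : ℝ :=
  f (Mup I RM F θ) - f (Mdn I RM F θ)

/-- Second order differential
`∂²f_{θ,θ'} = f(M^θ ∧ M_{θ'}) + f(M_θ ∧ M^{θ'}) − f(M_θ ∧ M_{θ'}) − f(M^θ ∧ M^{θ'})`. -/
def d2 (I : SchoolInstance A B) (RM : Matching I → Set (Rot A B))
    (F : Set (Matching I)) (f : Matching I → ℝ) (θ θ' : Set (Rot A B)) : ℝ :=
  f (meetM I (Mup I RM F θ) (Mdn I RM F θ')) + f (meetM I (Mdn I RM F θ) (Mup I RM F θ'))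
    - f (meetM I (Mdn I RM F θ) (Mdn I RM F θ')) - f (meetM I (Mup I RM F θ) (Mup I RM F θ'))

/-- The greatest element `M₀^F` of `F` (via definite description). -/
def topF (I : SchoolInstance A B) (F : Set (Matching I)) : Matching I :=
  Classical.epsilon fun N => N ∈ F ∧ ∀ P ∈ F, matGE I N P

/-- Vertices of the digraph: all rotations, plus a source `s` and sink `t`. -/
abbrev Vtx (A B : Type) : Type := Rot A B ⊕ Bool

/-- The source `s`. -/
def srcV : Vtx A B := Sum.inr true

/-- The sink `t`. -/
def tgtV : Vtx A B := Sum.inr false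

/-- The value of the cut `S` for the capacity function `u`: the total capacity
of the arcs leaving `S`. -/
def cutVal (u : Vtx A B → Vtx A B → ℝ≥0∞) (S : Set (Vtx A B)) : ℝ≥0∞ :=
  ∑ p : Vtx A B × Vtx A B, if p.1 ∈ S ∧ p.2 ∉ S then u p.1 p.2 else 0

/-- The `s`-`t` cut `{s} ∪ R`. -/
def cutOf (R : Set (Rot A B)) : Set (Vtx A B) := insert srcV (Sum.inl '' R)

/-- `(u, C)` witnesses minimum cut representability of `Π(f, F)`: for every
`R ⊆ R(I)`, the cut `{s} ∪ R` has finite capacity iff `R` is upper-closed and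
`M_R ∈ F`, and in that case its value is `f(M_R) + C`. -/
def MinCutRepWith (I : SchoolInstance A B) (RM : Matching I → Set (Rot A B))
    (F : Set (Matching I)) (f : Matching I → ℝ)
    (u : Vtx A B → Vtx A B → ℝ≥0∞) (C : ℝ) : Prop :=
  ∀ R : Set (Rot A B), R ⊆ RotSet I →
    ((cutVal u (cutOf R) ≠ ⊤ ↔
        (UpperClosed I RM R ∧ ∃ M, Stable I M ∧ RM M = R ∧ M ∈ F)) ∧
      (∀ M, Stable I M → RM M = R → M ∈ F → (cutVal u (cutOf R)).toReal = f M + C))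

/-- The problem `Π(f, F)` is minimum cut representable. -/
def MinCutRep (I : SchoolInstance A B) (RM : Matching I → Set (Rot A B))
    (F : Set (Matching I)) (f : Matching I → ℝ) : Prop :=
  ∃ u C, MinCutRepWith I RM F f u C

/-- The cut digraph `D^{f,F}` (with representative rotations `rep` and
constant `γ`); capacities of parallel arcs are added. -/
def cutDigraph (I : SchoolInstance A B) (RM : Matching I → Set (Rot A B))
    (F : Set (Matching I)) (f : Matching I → ℝ)
    (rep : Set (Rot A B) → Rot A B) (γ : ℝ) : Vtx A B → Vtx A B → ℝ≥0∞ :=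
  fun x y =>
    (if ∃ θ, IsMetaRot I RM F θ ∧ ∃ r ∈ θ, ∃ r' ∈ θ, r ≠ r' ∧ x = Sum.inl r ∧ y = Sum.inl r'
      then ⊤ else 0)
    + (if ∃ θ θ', IsProperMeta I RM F θ ∧ IsProperMeta I RM F θ' ∧ θ ≠ θ' ∧
          metaDom I RM F θ' θ ∧ x = Sum.inl (rep θ) ∧ y = Sum.inl (rep θ')
        then ⊤ else 0)
    + (∑ θ : Set (Rot A B), ∑ θ' : Set (Rot A B),
        if IsProperMeta I RM F θ ∧ IsProperMeta I RM F θ' ∧ θ ≠ θ' ∧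
            x = Sum.inl (rep θ) ∧ y = Sum.inl (rep θ')
        then ENNReal.ofReal ((1 / 2) * d2 I RM F f θ θ') else 0)
    + (if (theta0 I RM F).Nonempty ∧ x = srcV ∧ y = Sum.inl (rep (theta0 I RM F))
        then ⊤ else 0)
    + (if (thetaZ I RM F).Nonempty ∧ x = Sum.inl (rep (thetaZ I RM F)) ∧ y = tgtV
        then ⊤ else 0)
    + (∑ θ : Set (Rot A B),
        if IsProperMeta I RM F θ ∧ x = Sum.inl (rep θ) ∧ y = tgtV
        then ENNReal.ofReal (d1 I RM F f θ -
          (1 / 2) * (∑ θ' : Set (Rot A B),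
            if IsProperMeta I RM F θ' ∧ θ' ≠ θ then d2 I RM F f θ θ' else 0) + γ)
        else 0)
    + (∑ θ : Set (Rot A B),
        if IsProperMeta I RM F θ ∧ x = srcV ∧ y = Sum.inl (rep θ)
        then ENNReal.ofReal γ else 0)

/-- `b` prefers `S'` to `S''`: every member of `S'` is preferred to every
member of `S'' ∖ S'`. -/
def prefersSet (I : SchoolInstance A B) (b : B) (S' S'' : Set (Option A)) : Prop :=
  ∀ x ∈ S', ∀ y ∈ S'', y ∉ S' → I.prefB b x y

/-- `A(ρ)`: students appearing in `ρ₊`. -/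
def Aof (r : Rot A B) : Set A := {a | ∃ b : B, (some a, some b) ∈ r.1}

/-- `B(ρ)`: schools appearing in `ρ₊`. -/
def Bof (r : Rot A B) : Set B := {b | ∃ a : A, (some a, some b) ∈ r.1}

/-- `ρ₊(b)`: students matched to `b` in `ρ₊`. -/
def rhoPlusB (r : Rot A B) (b : B) : Set A := {a | (some a, some b) ∈ r.1}

/-- `R^ρ = {ρ' : ρ' ⊵ ρ}`. -/
def RupRot (I : SchoolInstance A B) (RM : Matching I → Set (Rot A B))
    (r : Rot A B) : Set (Rot A B) :=
  {r' | r' ∈ RotSet I ∧ domRel I RM r' r}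

/-- `R_ρ = {ρ' : ρ' ▷ ρ}`. -/
def RdnRot (I : SchoolInstance A B) (RM : Matching I → Set (Rot A B))
    (r : Rot A B) : Set (Rot A B) :=
  {r' | r' ∈ RotSet I ∧ strictDom I RM r' r}

/-- `M^ρ`. -/
def MupRot (I : SchoolInstance A B) (RM : Matching I → Set (Rot A B))
    (r : Rot A B) : Matching I :=
  MofR I RM (RupRot I RM r)

/-- `M_ρ`. -/
def MdnRot (I : SchoolInstance A B) (RM : Matching I → Set (Rot A B))
    (r : Rot A B) : Matching I :=
  MofR I RM (RdnRot I RM r)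

/-- First order differential of `f` at a rotation: `∂f_ρ = f(M^ρ) − f(M_ρ)`. -/
def d1Rot (I : SchoolInstance A B) (RM : Matching I → Set (Rot A B))
    (f : Matching I → ℝ) (r : Rot A B) : ℝ :=
  f (MupRot I RM r) - f (MdnRot I RM r)

/-- Second order differential of `f` at a pair of distinct rotations. -/
def d2Rot (I : SchoolInstance A B) (RM : Matching I → Set (Rot A B))
    (f : Matching I → ℝ) (r r' : Rot A B) : ℝ :=
  f (meetM I (MupRot I RM r) (MdnRot I RM r')) + f (meetM I (MdnRot I RM r) (MupRot I RM r'))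
    - f (meetM I (MdnRot I RM r) (MdnRot I RM r'))
    - f (meetM I (MupRot I RM r) (MupRot I RM r'))

/-- The pair `(ρ_in, ρ_out)` characterizes the stable matchings assigning both
siblings `a, ā` to school `b`. -/
def siblingChar (I : SchoolInstance A B) (RM : Matching I → Set (Rot A B))
    (a abar : A) (b : B) (p : Rot A B × Rot A B) : Prop :=
  ∀ M : Matching I, Stable I M →
    ((M.toFun a = some b ∧ M.toFun abar = some b) ↔ (p.1 ∈ RM M ∧ p.2 ∉ RM M))

/-- Some stable matching assigns both `a` and `ā` to `b`. -/
def goodSchool (I : SchoolInstance A B) (a abar : A) (b : B) : Prop :=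
  ∃ M, Stable I M ∧ M.toFun a = some b ∧ M.toFun abar = some b

/-- The pair `(ρ_in(a,ā,b), ρ_out(a,ā,b))` (via definite description). -/
def siblingPair (I : SchoolInstance A B) (RM : Matching I → Set (Rot A B))
    (a abar : A) (b : B) : Rot A B × Rot A B :=
  Classical.epsilon fun p => p.1 ∈ RotSet I ∧ p.2 ∈ RotSet I ∧
    siblingChar I RM a abar b p ∧ strictDom I RM p.1 p.2

/-- `R_in(a, ā)`. -/
def Rin (I : SchoolInstance A B) (RM : Matching I → Set (Rot A B))
    (a abar : A) : Set (Rot A B) :=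
  {r | ∃ b, goodSchool I a abar b ∧ r = (siblingPair I RM a abar b).1}

/-- `R_out(a, ā)`. -/
def Rout (I : SchoolInstance A B) (RM : Matching I → Set (Rot A B))
    (a abar : A) : Set (Rot A B) :=
  {r | ∃ b, goodSchool I a abar b ∧ r = (siblingPair I RM a abar b).2}

/-- The indicator function: `0` when the siblings are matched to the same
school, `1` otherwise. -/
def sibIndicator (I : SchoolInstance A B) (a abar : A) : Matching I → ℝ :=
  fun M => if M.toFun a = M.toFun abar then 0 else 1

end SM

namespace SM

variable {A B : Type} [Fintype A] [Fintype B] [DecidableEq A] [DecidableEq B]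


/-! ### Auxiliary development -/

set_option linter.unusedSectionVars false
set_option maxHeartbeats 1000000

section AuxOrder

variable {I : SchoolInstance A B}

lemma pA_trans {a : A} {x y z : Option B} (h1 : I.prefA a x y) (h2 : I.prefA a y z) :
    I.prefA a x z := (I.prefA_sto a).trans x y z h1 h2

lemma pA_irrefl {a : A} {x : Option B} (h : I.prefA a x x) : False :=
  (I.prefA_sto a).irrefl x h

lemma pA_asymm {a : A} {x y : Option B} (h : I.prefA a x y) (h' : I.prefA a y x) : False :=
  pA_irrefl (pA_trans h h')

lemma pA_total {a : A} {x y : Option B} (h : x ≠ y) : I.prefA a x y ∨ I.prefA a y x := by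
  by_cases h1 : I.prefA a x y
  · exact Or.inl h1
  by_cases h2 : I.prefA a y x
  · exact Or.inr h2
  exact absurd ((I.prefA_sto a).trichotomous x y h1 h2) h

lemma pB_trans {b : B} {x y z : Option A} (h1 : I.prefB b x y) (h2 : I.prefB b y z) :
    I.prefB b x z := (I.prefB_sto b).trans x y z h1 h2

lemma pB_irrefl {b : B} {x : Option A} (h : I.prefB b x x) : False :=
  (I.prefB_sto b).irrefl x h

lemma pB_asymm {b : B} {x y : Option A} (h : I.prefB b x y) (h' : I.prefB b y x) : False :=
  pB_irrefl (pB_trans h h')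

lemma pB_total {b : B} {x y : Option A} (h : x ≠ y) : I.prefB b x y ∨ I.prefB b y x := by
  by_cases h1 : I.prefB b x y
  · exact Or.inl h1
  by_cases h2 : I.prefB b y x
  · exact Or.inr h2
  exact absurd ((I.prefB_sto b).trichotomous x y h1 h2) h

end AuxOrder

/-- Weak preference `x ⪰ y` for student `a`. -/
def wge (I : SchoolInstance A B) (a : A) (x y : Option B) : Prop :=
  x = y ∨ I.prefA a x y

section AuxWge

variable {I : SchoolInstance A B}

lemma wge_refl (a : A) (x : Option B) : wge I a x x := Or.inl rfl

lemma wge_trans {a : A} {x y z : Option B} (h1 : wge I a x y) (h2 : wge I a y z) :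
    wge I a x z := by
  rcases h1 with rfl | h1
  · exact h2
  · rcases h2 with rfl | h2
    · exact Or.inr h1
    · exact Or.inr (pA_trans h1 h2)

lemma wge_antisymm {a : A} {x y : Option B} (h1 : wge I a x y) (h2 : wge I a y x) : x = y := by
  rcases h1 with rfl | h1
  · rfl
  · rcases h2 with rfl | h2
    · rfl
    · exact absurd h2 (fun h' => pA_asymm h1 h')

lemma wge_total {a : A} (x y : Option B) : wge I a x y ∨ wge I a y x := by
  by_cases h : x = y
  · exact Or.inl (Or.inl h)
  · rcases pA_total (I := I) (a := a) h with h1 | h1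
    · exact Or.inl (Or.inr h1)
    · exact Or.inr (Or.inr h1)

lemma wge_pA_trans {a : A} {x y z : Option B} (h1 : wge I a x y) (h2 : I.prefA a y z) :
    I.prefA a x z := by
  rcases h1 with rfl | h1
  · exact h2
  · exact pA_trans h1 h2

lemma pA_wge_trans {a : A} {x y z : Option B} (h1 : I.prefA a x y) (h2 : wge I a y z) :
    I.prefA a x z := by
  rcases h2 with rfl | h2
  · exact h1
  · exact pA_trans h1 h2

lemma not_pA_of_wge {a : A} {x y : Option B} (h : wge I a x y) : ¬ I.prefA a y x :=
  fun h' => pA_irrefl (wge_pA_trans h h')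

lemma wge_of_not_pA {a : A} {x y : Option B} (h : ¬ I.prefA a y x) : wge I a x y := by
  by_cases hxy : x = y
  · exact Or.inl hxy
  · rcases pA_total (I := I) (a := a) hxy with h1 | h1
    · exact Or.inr h1
    · exact absurd h1 h

lemma Matching.ext' {M N : Matching I} (h : M.toFun = N.toFun) : M = N := by
  cases M; cases N; simpa using h

lemma matGE_iff_wge {M N : Matching I} :
    matGE I M N ↔ ∀ a, wge I a (M.toFun a) (N.toFun a) := Iff.rfl

lemma matGE_refl (M : Matching I) : matGE I M M := fun a => Or.inl rfl

lemma matGE_wge {M N : Matching I} (h : matGE I M N) (a : A) :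
    wge I a (M.toFun a) (N.toFun a) := h a

lemma matGE_trans {M N P : Matching I} (h1 : matGE I M N) (h2 : matGE I N P) :
    matGE I M P := fun a => wge_trans (h1 a) (h2 a)

lemma matGE_antisymm {M N : Matching I} (h1 : matGE I M N) (h2 : matGE I N M) : M = N :=
  Matching.ext' (funext fun a => wge_antisymm (h1 a) (h2 a))

end AuxWge

/-! ### Counting lemmas for pairs of stable matchings -/

/-- Students assigned to `b` both in `M` and `M'`. -/
def iSet (I : SchoolInstance A B) (M M' : Matching I) (b : B) : Finset A :=
  Finset.univ.filter fun a => M.toFun a = some b ∧ M'.toFun a = some b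

/-- Students assigned to `b` in `M` who strictly prefer `b` to their `M'`-school. -/
def sSet (I : SchoolInstance A B) (M M' : Matching I) (b : B) : Finset A :=
  Finset.univ.filter fun a => M.toFun a = some b ∧ I.prefA a (some b) (M'.toFun a)

/-- Students assigned to `b` in `M` who strictly prefer their `M'`-school to `b`. -/
def tSet (I : SchoolInstance A B) (M M' : Matching I) (b : B) : Finset A :=
  Finset.univ.filter fun a => M.toFun a = some b ∧ I.prefA a (M'.toFun a) (some b)

/-- Students strictly preferring their `M'`-school to their `M`-school. -/
def impSet (I : SchoolInstance A B) (M M' : Matching I) : Finset A :=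
  Finset.univ.filter fun a => I.prefA a (M'.toFun a) (M.toFun a)

section Counting

variable {I : SchoolInstance A B} {M M' : Matching I}

lemma mem_iSet {a b} : a ∈ iSet I M M' b ↔ M.toFun a = some b ∧ M'.toFun a = some b := by
  simp [iSet]

lemma mem_sSet {a b} :
    a ∈ sSet I M M' b ↔ M.toFun a = some b ∧ I.prefA a (some b) (M'.toFun a) := by
  simp [sSet]

lemma mem_tSet {a b} :
    a ∈ tSet I M M' b ↔ M.toFun a = some b ∧ I.prefA a (M'.toFun a) (some b) := by
  simp [tSet]

lemma mem_assignedTo {a b} : a ∈ assignedTo I M b ↔ M.toFun a = some b := by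
  simp [assignedTo]

lemma assignedTo_card_le (M : Matching I) (b : B) : (assignedTo I M b).card ≤ I.q b := by
  have h := M.quota b
  unfold assignedTo
  convert h using 2
  ext a
  simp [Finset.mem_filter]

lemma iSet_comm (b : B) : iSet I M M' b = iSet I M' M b := by
  ext a; simp [mem_iSet, and_comm]

lemma card_decomp (b : B) :
    (assignedTo I M b).card
      = (iSet I M M' b).card + (sSet I M M' b).card + (tSet I M M' b).card := by
  classical
  have h1 : (assignedTo I M b).filter (fun a => M'.toFun a = some b) = iSet I M M' b := by
    ext a; simp [assignedTo, iSet, Finset.mem_filter, and_assoc]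
  have h2 : ((assignedTo I M b).filter fun a => ¬ M'.toFun a = some b).filter
      (fun a => I.prefA a (some b) (M'.toFun a)) = sSet I M M' b := by
    ext a
    simp only [Finset.mem_filter, mem_assignedTo, mem_sSet]
    constructor
    · rintro ⟨⟨h, -⟩, h'⟩; exact ⟨h, h'⟩
    · rintro ⟨h, h'⟩
      refine ⟨⟨h, fun hb => ?_⟩, h'⟩
      rw [hb] at h'; exact pA_irrefl h'
  have h3 : ((assignedTo I M b).filter fun a => ¬ M'.toFun a = some b).filter
      (fun a => ¬ I.prefA a (some b) (M'.toFun a)) = tSet I M M' b := by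
    ext a
    simp only [Finset.mem_filter, mem_assignedTo, mem_tSet]
    constructor
    · rintro ⟨⟨h, hne⟩, h'⟩
      refine ⟨h, ?_⟩
      rcases pA_total (I := I) (a := a) (fun hh : M'.toFun a = some b => hne hh) with h1 | h1
      · exact h1
      · exact absurd h1 h'
    · rintro ⟨h, h'⟩
      refine ⟨⟨h, fun hb => ?_⟩, fun h'' => pA_asymm h' h''⟩
      rw [hb] at h'; exact pA_irrefl h'
  have e1 := Finset.card_filter_add_card_filter_not
    (s := assignedTo I M b) (p := fun a => M'.toFun a = some b)
  have e2 := Finset.card_filter_add_card_filter_not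
    (s := (assignedTo I M b).filter fun a => ¬ M'.toFun a = some b)
    (p := fun a => I.prefA a (some b) (M'.toFun a))
  rw [h1] at e1
  rw [h2, h3] at e2
  omega

/-- If `a` is assigned to `b` in `M'` and strictly prefers `b` to its `M`-school, then
`b` is full in `M` and prefers all its `M`-students to `a`. -/
lemma arrive_full (hM : Stable I M) (hM' : Stable I M') {a b} (ha : a ∈ sSet I M' M b) :
    (assignedTo I M b).card = I.q b ∧
      ∀ x ∈ assignedTo I M b, I.prefB b (some x) (some a) := by
  rcases mem_sSet.1 ha with ⟨ha1, ha2⟩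
  have hanone : I.prefB b (some a) none := by
    rcases pB_total (I := I) (b := b) (x := some a) (y := none) (by simp) with h | h
    · exact h
    · exact absurd ⟨a, ha1, h⟩ (fun hh => hM'.2.2 ⟨b, hh⟩)
  have hnoblock : ¬ BlocksPair I M a b := fun hb => hM.1 ⟨a, b, hb⟩
  have hfull : ¬ hasSlack I M b := by
    intro hs
    exact hnoblock ⟨ha2, none, Or.inr ⟨rfl, hs⟩, hanone⟩
  constructor
  · exact le_antisymm (assignedTo_card_le M b) (not_lt.1 hfull)
  · intro x hx
    have hxa : x ≠ a := by
      intro h; subst h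
      rw [mem_assignedTo.1 hx] at ha2; exact pA_irrefl ha2
    rcases pB_total (I := I) (b := b) (x := some x) (y := some a) (by simpa using hxa) with h | h
    · exact h
    · exact absurd (hnoblock ⟨ha2, some x, Or.inl ⟨x, rfl, mem_assignedTo.1 hx⟩, h⟩) id

lemma not_both (hM : Stable I M) (hM' : Stable I M') {a a' b}
    (h : a ∈ sSet I M M' b) (h' : a' ∈ sSet I M' M b) : False := by
  have H1 := arrive_full hM hM' h'
  have H2 := arrive_full hM' hM h
  have ha : a ∈ assignedTo I M b := mem_assignedTo.2 (mem_sSet.1 h).1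
  have ha' : a' ∈ assignedTo I M' b := mem_assignedTo.2 (mem_sSet.1 h').1
  exact pB_asymm (H1.2 a ha) (H2.2 a' ha')

lemma card_s'_le_t (hM : Stable I M) (hM' : Stable I M') (b : B) :
    (sSet I M' M b).card ≤ (tSet I M M' b).card := by
  rcases Finset.eq_empty_or_nonempty (sSet I M' M b) with he | ⟨a0, ha0⟩
  · simp [he]
  · have hfull := (arrive_full hM hM' ha0).1
    have hs : sSet I M M' b = ∅ := by
      rcases Finset.eq_empty_or_nonempty (sSet I M M' b) with he | ⟨a1, ha1⟩
      · exact he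
      · exact absurd (not_both hM hM' ha1 ha0) id
    have d1 := card_decomp (I := I) (M := M) (M' := M') b
    have d2 := card_decomp (I := I) (M := M') (M' := M) b
    have hq' : (assignedTo I M' b).card ≤ I.q b := assignedTo_card_le M' b
    have hcomm : (iSet I M' M b).card = (iSet I M M' b).card := by rw [iSet_comm]
    rw [hs, Finset.card_empty] at d1
    omega

lemma sum_sSet (hM : Stable I M) :
    ∑ b : B, (sSet I M' M b).card = (impSet I M M').card := by
  classical
  have hdisj : ∀ b ∈ Finset.univ, ∀ b' ∈ Finset.univ, b ≠ b' →
      Disjoint (sSet I M' M b) (sSet I M' M b') := by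
    intro b _ b' _ hbb
    refine Finset.disjoint_left.2 fun a h1 h2 => ?_
    rcases mem_sSet.1 h1 with ⟨e1, -⟩
    rcases mem_sSet.1 h2 with ⟨e2, -⟩
    rw [e1] at e2; exact hbb (by injection e2)
  rw [← Finset.card_biUnion hdisj]
  congr 1
  ext a
  constructor
  · intro ha
    rcases Finset.mem_biUnion.1 ha with ⟨b, -, hb⟩
    rcases mem_sSet.1 hb with ⟨h1, h2⟩
    simp only [impSet, Finset.mem_filter, Finset.mem_univ, true_and]
    rw [h1]; exact h2
  · intro ha
    have h : I.prefA a (M'.toFun a) (M.toFun a) := by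
      simpa [impSet] using ha
    rcases he : M'.toFun a with _ | b
    · rw [he] at h
      exact absurd ⟨a, h⟩ hM.2.1
    · refine Finset.mem_biUnion.2 ⟨b, Finset.mem_univ b, mem_sSet.2 ⟨he, ?_⟩⟩
      rw [he] at h; exact h

lemma sum_tSet_le :
    ∑ b : B, (tSet I M M' b).card ≤ (impSet I M M').card := by
  classical
  have hdisj : ∀ b ∈ Finset.univ, ∀ b' ∈ Finset.univ, b ≠ b' →
      Disjoint (tSet I M M' b) (tSet I M M' b') := by
    intro b _ b' _ hbb
    refine Finset.disjoint_left.2 fun a h1 h2 => ?_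
    rcases mem_tSet.1 h1 with ⟨e1, -⟩
    rcases mem_tSet.1 h2 with ⟨e2, -⟩
    rw [e1] at e2; exact hbb (by injection e2)
  rw [← Finset.card_biUnion hdisj]
  apply Finset.card_le_card
  intro a ha
  rcases Finset.mem_biUnion.1 ha with ⟨b, -, hb⟩
  rcases mem_tSet.1 hb with ⟨e1, h2⟩
  simp only [impSet, Finset.mem_filter, Finset.mem_univ, true_and]
  rw [e1]; exact h2

lemma card_s'_eq_t (hM : Stable I M) (hM' : Stable I M') (b : B) :
    (sSet I M' M b).card = (tSet I M M' b).card := by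
  have hle : ∀ b ∈ Finset.univ, (sSet I M' M b).card ≤ (tSet I M M' b).card :=
    fun b _ => card_s'_le_t hM hM' b
  have hsum : ∑ b : B, (tSet I M M' b).card ≤ ∑ b : B, (sSet I M' M b).card := by
    rw [sum_sSet (M' := M') hM]
    exact sum_tSet_le
  have := (Finset.sum_eq_sum_iff_of_le hle).1
    (le_antisymm (Finset.sum_le_sum hle) hsum)
  exact this b (Finset.mem_univ b)

lemma card_assigned_eq (hM : Stable I M) (hM' : Stable I M') (b : B) :
    (assignedTo I M b).card = (assignedTo I M' b).card := by
  have d1 := card_decomp (I := I) (M := M) (M' := M') b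
  have d2 := card_decomp (I := I) (M := M') (M' := M) b
  have e1 := card_s'_eq_t hM hM' b
  have e2 := card_s'_eq_t hM' hM b
  have hcomm : (iSet I M' M b).card = (iSet I M M' b).card := by rw [iSet_comm]
  omega

end Counting


/-! ### Pointwise max and min of two matchings -/

/-- The better of `x`, `y` for student `a`. -/
def omax (I : SchoolInstance A B) (a : A) (x y : Option B) : Option B :=
  if wge I a x y then x else y

/-- The worse of `x`, `y` for student `a`. -/
def omin (I : SchoolInstance A B) (a : A) (x y : Option B) : Option B :=
  if wge I a x y then y else x

section OmaxOmin

variable {I : SchoolInstance A B} {a : A}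

lemma omax_eq_or (x y : Option B) : omax I a x y = x ∨ omax I a x y = y := by
  unfold omax; split
  · exact Or.inl rfl
  · exact Or.inr rfl

lemma omin_eq_or (x y : Option B) : omin I a x y = x ∨ omin I a x y = y := by
  unfold omin; split
  · exact Or.inr rfl
  · exact Or.inl rfl

lemma wge_omax_left (x y : Option B) : wge I a (omax I a x y) x := by
  unfold omax; split
  · exact wge_refl a x
  · next h =>
    rcases wge_total (I := I) (a := a) x y with h1 | h1
    · exact absurd h1 h
    · exact h1

lemma wge_omax_right (x y : Option B) : wge I a (omax I a x y) y := by
  unfold omax; split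
  · next h => exact h
  · exact wge_refl a y

lemma wge_omin_left (x y : Option B) : wge I a x (omin I a x y) := by
  unfold omin; split
  · next h => exact h
  · exact wge_refl a x

lemma wge_omin_right (x y : Option B) : wge I a y (omin I a x y) := by
  unfold omin; split
  · exact wge_refl a y
  · next h =>
    rcases wge_total (I := I) (a := a) x y with h1 | h1
    · exact absurd h1 h
    · exact h1

lemma omax_le {x y w : Option B} (h1 : wge I a w x) (h2 : wge I a w y) :
    wge I a w (omax I a x y) := by
  unfold omax; split <;> assumption

lemma omin_ge {x y w : Option B} (h1 : wge I a x w) (h2 : wge I a y w) :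
    wge I a (omin I a x y) w := by
  unfold omin; split <;> assumption

lemma omin_absorb {m z z' : Option B} (h : wge I a z' z) :
    omin I a (omin I a m z') z = omin I a m z := by
  by_cases h1 : wge I a m z'
  · have e1 : omin I a m z' = z' := by unfold omin; rw [if_pos h1]
    have e2 : omin I a z' z = z := by unfold omin; rw [if_pos h]
    have e3 : omin I a m z = z := by unfold omin; rw [if_pos (wge_trans h1 h)]
    rw [e1, e2, e3]
  · have e1 : omin I a m z' = m := by unfold omin; rw [if_neg h1]
    rw [e1]

end OmaxOmin


section JoinMeet

variable {I : SchoolInstance A B} {M M' : Matching I}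

lemma omax_eq_some_iff {a b} :
    omax I a (M.toFun a) (M'.toFun a) = some b ↔
      (a ∈ iSet I M M' b ∨ a ∈ sSet I M M' b ∨ a ∈ sSet I M' M b) := by
  constructor
  · intro h
    by_cases hw : wge I a (M.toFun a) (M'.toFun a)
    · have hx : M.toFun a = some b := by
        have : omax I a (M.toFun a) (M'.toFun a) = M.toFun a := by
          unfold omax; rw [if_pos hw]
        rw [← this, h]
      rcases hw with he | hp
      · exact Or.inl (mem_iSet.2 ⟨hx, by rw [← he, hx]⟩)
      · exact Or.inr (Or.inl (mem_sSet.2 ⟨hx, by rw [← hx]; exact hp⟩))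
    · have hx : M'.toFun a = some b := by
        have : omax I a (M.toFun a) (M'.toFun a) = M'.toFun a := by
          unfold omax; rw [if_neg hw]
        rw [← this, h]
      have hp : I.prefA a (M'.toFun a) (M.toFun a) := by
        rcases wge_total (I := I) (a := a) (M.toFun a) (M'.toFun a) with h1 | h1
        · exact absurd h1 hw
        · rcases h1 with he | hp
          · exact absurd (Or.inl he.symm) hw
          · exact hp
      exact Or.inr (Or.inr (mem_sSet.2 ⟨hx, by rw [← hx]; exact hp⟩))
  · intro h
    rcases h with h | h | h
    · rcases mem_iSet.1 h with ⟨h1, h2⟩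
      have hw : wge I a (M.toFun a) (M'.toFun a) := Or.inl (by rw [h1, h2])
      unfold omax; rw [if_pos hw]; exact h1
    · rcases mem_sSet.1 h with ⟨h1, h2⟩
      have hw : wge I a (M.toFun a) (M'.toFun a) := Or.inr (by rw [h1]; exact h2)
      unfold omax; rw [if_pos hw]; exact h1
    · rcases mem_sSet.1 h with ⟨h1, h2⟩
      have hw : ¬ wge I a (M.toFun a) (M'.toFun a) := by
        intro hw
        exact pA_irrefl (wge_pA_trans hw (by rw [h1]; exact h2))
      unfold omax; rw [if_neg hw]; exact h1

lemma omin_eq_some_iff {a b} :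
    omin I a (M.toFun a) (M'.toFun a) = some b ↔
      (a ∈ iSet I M M' b ∨ a ∈ tSet I M M' b ∨ a ∈ tSet I M' M b) := by
  constructor
  · intro h
    by_cases hw : wge I a (M.toFun a) (M'.toFun a)
    · have hx : M'.toFun a = some b := by
        have : omin I a (M.toFun a) (M'.toFun a) = M'.toFun a := by
          unfold omin; rw [if_pos hw]
        rw [← this, h]
      rcases hw with he | hp
      · exact Or.inl (mem_iSet.2 ⟨by rw [he, hx], hx⟩)
      · exact Or.inr (Or.inr (mem_tSet.2 ⟨hx, by rw [← hx]; exact hp⟩))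
    · have hx : M.toFun a = some b := by
        have : omin I a (M.toFun a) (M'.toFun a) = M.toFun a := by
          unfold omin; rw [if_neg hw]
        rw [← this, h]
      have hp : I.prefA a (M'.toFun a) (M.toFun a) := by
        rcases wge_total (I := I) (a := a) (M.toFun a) (M'.toFun a) with h1 | h1
        · exact absurd h1 hw
        · rcases h1 with he | hp
          · exact absurd (Or.inl he.symm) hw
          · exact hp
      exact Or.inr (Or.inl (mem_tSet.2 ⟨hx, by rw [← hx]; exact hp⟩))
  · intro h
    rcases h with h | h | h
    · rcases mem_iSet.1 h with ⟨h1, h2⟩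
      have hw : wge I a (M.toFun a) (M'.toFun a) := Or.inl (by rw [h1, h2])
      unfold omin; rw [if_pos hw]; exact h2
    · rcases mem_tSet.1 h with ⟨h1, h2⟩
      have hw : ¬ wge I a (M.toFun a) (M'.toFun a) := by
        intro hw
        exact pA_irrefl (wge_pA_trans hw (by rw [h1]; exact h2))
      unfold omin; rw [if_neg hw]; exact h1
    · rcases mem_tSet.1 h with ⟨h1, h2⟩
      have hw : wge I a (M.toFun a) (M'.toFun a) := by
        rcases wge_total (I := I) (a := a) (M.toFun a) (M'.toFun a) with h1' | h1'
        · exact h1'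
        · rcases h1' with he | hp
          · exact Or.inl he.symm
          · rw [h1] at hp
            exact absurd (pA_trans hp h2) pA_irrefl
      unfold omin; rw [if_pos hw]; exact h1

lemma disj_i_s (b : B) : Disjoint (iSet I M M' b) (sSet I M M' b) :=
  Finset.disjoint_left.2 fun a h1 h2 => by
    rcases mem_iSet.1 h1 with ⟨-, e2⟩
    rcases mem_sSet.1 h2 with ⟨-, hp⟩
    rw [e2] at hp; exact pA_irrefl hp

lemma disj_i_s' (b : B) : Disjoint (iSet I M M' b) (sSet I M' M b) :=
  Finset.disjoint_left.2 fun a h1 h2 => by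
    rcases mem_iSet.1 h1 with ⟨e1, -⟩
    rcases mem_sSet.1 h2 with ⟨-, hp⟩
    rw [e1] at hp; exact pA_irrefl hp

lemma disj_s_s' (b : B) : Disjoint (sSet I M M' b) (sSet I M' M b) :=
  Finset.disjoint_left.2 fun a h1 h2 => by
    rcases mem_sSet.1 h1 with ⟨e1, -⟩
    rcases mem_sSet.1 h2 with ⟨-, hp⟩
    rw [e1] at hp; exact pA_irrefl hp

lemma disj_i_t (b : B) : Disjoint (iSet I M M' b) (tSet I M M' b) :=
  Finset.disjoint_left.2 fun a h1 h2 => by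
    rcases mem_iSet.1 h1 with ⟨-, e2⟩
    rcases mem_tSet.1 h2 with ⟨-, hp⟩
    rw [e2] at hp; exact pA_irrefl hp

lemma disj_i_t' (b : B) : Disjoint (iSet I M M' b) (tSet I M' M b) :=
  Finset.disjoint_left.2 fun a h1 h2 => by
    rcases mem_iSet.1 h1 with ⟨e1, -⟩
    rcases mem_tSet.1 h2 with ⟨-, hp⟩
    rw [e1] at hp; exact pA_irrefl hp

lemma disj_t_t' (b : B) : Disjoint (tSet I M M' b) (tSet I M' M b) :=
  Finset.disjoint_left.2 fun a h1 h2 => by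
    rcases mem_tSet.1 h1 with ⟨e1, -⟩
    rcases mem_tSet.1 h2 with ⟨-, hp⟩
    rw [e1] at hp; exact pA_irrefl hp

/-- The pointwise max as a function. -/
def joinFun (I : SchoolInstance A B) (M M' : Matching I) : A → Option B :=
  fun a => omax I a (M.toFun a) (M'.toFun a)

/-- The pointwise min as a function. -/
def meetFun (I : SchoolInstance A B) (M M' : Matching I) : A → Option B :=
  fun a => omin I a (M.toFun a) (M'.toFun a)

lemma join_filter_card (hM : Stable I M) (hM' : Stable I M') (b : B) :
    (Finset.univ.filter fun a => joinFun I M M' a = some b).card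
      = (assignedTo I M b).card := by
  have e : (Finset.univ.filter fun a => joinFun I M M' a = some b)
      = (iSet I M M' b ∪ sSet I M M' b) ∪ sSet I M' M b := by
    ext a
    simp only [Finset.mem_filter, Finset.mem_univ, true_and, Finset.mem_union]
    constructor
    · intro h
      rcases omax_eq_some_iff.1 h with h | h | h <;> tauto
    · intro h
      exact omax_eq_some_iff.2 (by tauto)
  rw [e, Finset.card_union_of_disjoint, Finset.card_union_of_disjoint (disj_i_s b)]
  · have d1 := card_decomp (I := I) (M := M) (M' := M') b
    have e1 := card_s'_eq_t hM hM' b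
    omega
  · exact Finset.disjoint_union_left.2 ⟨disj_i_s' b, disj_s_s' b⟩

lemma meet_filter_card (hM : Stable I M) (hM' : Stable I M') (b : B) :
    (Finset.univ.filter fun a => meetFun I M M' a = some b).card
      = (assignedTo I M b).card := by
  have e : (Finset.univ.filter fun a => meetFun I M M' a = some b)
      = (iSet I M M' b ∪ tSet I M M' b) ∪ tSet I M' M b := by
    ext a
    simp only [Finset.mem_filter, Finset.mem_univ, true_and, Finset.mem_union]
    constructor
    · intro h
      rcases omin_eq_some_iff.1 h with h | h | h <;> tauto
    · intro h
      exact omin_eq_some_iff.2 (by tauto)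
  rw [e, Finset.card_union_of_disjoint, Finset.card_union_of_disjoint (disj_i_t b)]
  · have d1 := card_decomp (I := I) (M := M) (M' := M') b
    have e1 := card_s'_eq_t hM' hM b
    omega
  · exact Finset.disjoint_union_left.2 ⟨disj_i_t' b, disj_t_t' b⟩

/-- The pointwise join of two stable matchings. -/
def mjoin (hM : Stable I M) (hM' : Stable I M') : Matching I :=
  ⟨joinFun I M M', fun b => by
    refine le_trans (le_of_eq ?_) (assignedTo_card_le M b)
    have h := join_filter_card hM hM' b
    convert h using 2
    ext a
    simp [Finset.mem_filter]⟩

/-- The pointwise meet of two stable matchings. -/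
def mmeet (hM : Stable I M) (hM' : Stable I M') : Matching I :=
  ⟨meetFun I M M', fun b => by
    refine le_trans (le_of_eq ?_) (assignedTo_card_le M b)
    have h := meet_filter_card hM hM' b
    convert h using 2
    ext a
    simp [Finset.mem_filter]⟩

lemma mjoin_toFun (hM : Stable I M) (hM' : Stable I M') (a : A) :
    (mjoin hM hM').toFun a = omax I a (M.toFun a) (M'.toFun a) := rfl

lemma mmeet_toFun (hM : Stable I M) (hM' : Stable I M') (a : A) :
    (mmeet hM hM').toFun a = omin I a (M.toFun a) (M'.toFun a) := rfl

lemma assigned_mjoin (hM : Stable I M) (hM' : Stable I M') (b : B) :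
    assignedTo I (mjoin hM hM') b = (iSet I M M' b ∪ sSet I M M' b) ∪ sSet I M' M b := by
  ext a
  rw [mem_assignedTo, Finset.mem_union, Finset.mem_union, mjoin_toFun, omax_eq_some_iff]
  tauto

lemma assigned_mmeet (hM : Stable I M) (hM' : Stable I M') (b : B) :
    assignedTo I (mmeet hM hM') b = (iSet I M M' b ∪ tSet I M M' b) ∪ tSet I M' M b := by
  ext a
  rw [mem_assignedTo, Finset.mem_union, Finset.mem_union, mmeet_toFun, omin_eq_some_iff]
  tauto

lemma assigned_mjoin_card (hM : Stable I M) (hM' : Stable I M') (b : B) :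
    (assignedTo I (mjoin hM hM') b).card = (assignedTo I M b).card := by
  rw [assigned_mjoin hM hM' b,
    Finset.card_union_of_disjoint (Finset.disjoint_union_left.2 ⟨disj_i_s' b, disj_s_s' b⟩),
    Finset.card_union_of_disjoint (disj_i_s b)]
  have d1 := card_decomp (I := I) (M := M) (M' := M') b
  have e1 := card_s'_eq_t hM hM' b
  omega

lemma assigned_mmeet_card (hM : Stable I M) (hM' : Stable I M') (b : B) :
    (assignedTo I (mmeet hM hM') b).card = (assignedTo I M b).card := by
  rw [assigned_mmeet hM hM' b,
    Finset.card_union_of_disjoint (Finset.disjoint_union_left.2 ⟨disj_i_t' b, disj_t_t' b⟩),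
    Finset.card_union_of_disjoint (disj_i_t b)]
  have d1 := card_decomp (I := I) (M := M) (M' := M') b
  have e1 := card_s'_eq_t hM' hM b
  omega

lemma hasSlack_iff (hM : Stable I M) (hM' : Stable I M') (b : B) :
    hasSlack I M b ↔ hasSlack I M' b := by
  unfold hasSlack
  rw [card_assigned_eq hM hM' b]

lemma mjoin_stable (hM : Stable I M) (hM' : Stable I M') : Stable I (mjoin hM hM') := by
  refine ⟨?_, ?_, ?_⟩
  · rintro ⟨a, b, hpref, x, hpart, hpB⟩
    have hbM : I.prefA a (some b) (M.toFun a) :=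
      pA_wge_trans hpref (wge_omax_left (M.toFun a) (M'.toFun a))
    have hbM' : I.prefA a (some b) (M'.toFun a) :=
      pA_wge_trans hpref (wge_omax_right (M.toFun a) (M'.toFun a))
    rcases hpart with ⟨a2, rfl, h2⟩ | ⟨rfl, hslack⟩
    · rcases omax_eq_some_iff.1 h2 with h | h | h
      · exact hM.1 ⟨a, b, hbM, some a2, Or.inl ⟨a2, rfl, (mem_iSet.1 h).1⟩, hpB⟩
      · exact hM.1 ⟨a, b, hbM, some a2, Or.inl ⟨a2, rfl, (mem_sSet.1 h).1⟩, hpB⟩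
      · exact hM'.1 ⟨a, b, hbM', some a2, Or.inl ⟨a2, rfl, (mem_sSet.1 h).1⟩, hpB⟩
    · have hsM : hasSlack I M b := by
        unfold hasSlack at hslack ⊢
        rw [assigned_mjoin_card hM hM' b] at hslack
        exact hslack
      exact hM.1 ⟨a, b, hbM, none, Or.inr ⟨rfl, hsM⟩, hpB⟩
  · rintro ⟨a, h⟩
    unfold BlocksStudent at h
    rcases omax_eq_or (I := I) (a := a) (M.toFun a) (M'.toFun a) with e | e
    · rw [mjoin_toFun, e] at h
      exact hM.2.1 ⟨a, h⟩
    · rw [mjoin_toFun, e] at h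
      exact hM'.2.1 ⟨a, h⟩
  · rintro ⟨b, a, he, hpB⟩
    rcases omax_eq_some_iff.1 he with h | h | h
    · exact hM.2.2 ⟨b, a, (mem_iSet.1 h).1, hpB⟩
    · exact hM.2.2 ⟨b, a, (mem_sSet.1 h).1, hpB⟩
    · exact hM'.2.2 ⟨b, a, (mem_sSet.1 h).1, hpB⟩

/-- Core of the no-blocking-pair argument for the pointwise meet, in the case where the
blocking student prefers `b` to its `M`-school. -/
lemma mmeet_block_core (hM : Stable I M) (hM' : Stable I M') {a b}
    (hMa : I.prefA a (some b) (M.toFun a)) (x : Option A)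
    (hpart : inPartners I (mmeet hM hM') b x) (hpB : I.prefB b (some a) x) : False := by
  have hMwit : ∀ x', inPartners I M b x' → ¬ I.prefB b (some a) x' :=
    fun x' h1 h2 => hM.1 ⟨a, b, hMa, x', h1, h2⟩
  rcases hpart with ⟨a0, rfl, h2⟩ | ⟨rfl, hslack⟩
  · rcases omin_eq_some_iff.1 h2 with h | h | h
    · exact hMwit (some a0) (Or.inl ⟨a0, rfl, (mem_iSet.1 h).1⟩) hpB
    · exact hMwit (some a0) (Or.inl ⟨a0, rfl, (mem_tSet.1 h).1⟩) hpB
    · -- a0 ∈ t'_b : assigned to b in M', prefers its M-school to b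
      rcases mem_tSet.1 h with ⟨ha0m, ha0p⟩
      have htri : I.prefA a (some b) (M'.toFun a) ∨ I.prefA a (M'.toFun a) (some b) ∨
          M'.toFun a = some b := by
        by_cases hh : M'.toFun a = some b
        · exact Or.inr (Or.inr hh)
        · rcases pA_total (I := I) (a := a) (x := some b) (y := M'.toFun a)
            (fun e => hh e.symm) with h' | h'
          · exact Or.inl h'
          · exact Or.inr (Or.inl h')
      rcases htri with hc | hc | hc
      · -- a also prefers b to its M'-school: blocks M'
        exact hM'.1 ⟨a, b, hc, some a0, Or.inl ⟨a0, rfl, ha0m⟩, hpB⟩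
      · -- a prefers its M'-school to b: cyclic contradiction on b's preferences
        have hcard : (sSet I M M' b).card = (tSet I M' M b).card := card_s'_eq_t hM' hM b
        have hne : (tSet I M' M b).Nonempty := ⟨a0, h⟩
        have hsne : (sSet I M M' b).Nonempty := by
          rw [← Finset.card_pos, hcard, Finset.card_pos]
          exact hne
        rcases hsne with ⟨w, hw⟩
        have hwassigned : w ∈ assignedTo I M b := mem_assignedTo.2 (mem_sSet.1 hw).1
        -- b prefers w to a (from stability of M)
        have hwa : I.prefB b (some w) (some a) := by
          have hne2 : (some w : Option A) ≠ some a := by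
            intro hh
            have : M.toFun a = some b := by
              rw [← (mem_sSet.1 hw).1]; congr 1; exact (Option.some_injective A hh).symm
            rw [this] at hMa; exact pA_irrefl hMa
          rcases pB_total (I := I) (b := b) hne2 with h' | h'
          · exact h'
          · exact absurd (hMwit (some w) (Or.inl ⟨w, rfl, (mem_sSet.1 hw).1⟩) h') id
        -- b prefers a0 to w (from stability of M', since w wants to come to b)
        have ha0w : I.prefB b (some a0) (some w) :=
          (arrive_full hM' hM hw).2 a0 (mem_assignedTo.2 ha0m)
        exact pB_irrefl (pB_trans hpB (pB_trans ha0w hwa))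
      · -- M' assigns a to b: then a ∈ s'_b, so t'_b is empty, contradiction
        have ha' : a ∈ sSet I M' M b := mem_sSet.2 ⟨hc, hMa⟩
        have hempty : sSet I M M' b = ∅ := by
          rcases Finset.eq_empty_or_nonempty (sSet I M M' b) with he | ⟨a1, ha1⟩
          · exact he
          · exact absurd (not_both hM hM' ha1 ha') id
        have hcard : (sSet I M M' b).card = (tSet I M' M b).card := card_s'_eq_t hM' hM b
        rw [hempty, Finset.card_empty] at hcard
        have : a0 ∈ (∅ : Finset A) := by
          rw [← Finset.card_eq_zero.1 hcard.symm]; exact h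
        simp at this
  · have hsM : hasSlack I M b := by
      unfold hasSlack at hslack ⊢
      rw [assigned_mmeet_card hM hM' b] at hslack
      exact hslack
    exact hMwit none (Or.inr ⟨rfl, hsM⟩) hpB

lemma omin_comm' {x y : Option B} : omin I a x y = omin I a y x :=
  wge_antisymm (omin_ge (wge_omin_right y x) (wge_omin_left y x))
    (omin_ge (wge_omin_right x y) (wge_omin_left x y))

lemma mmeet_comm (hM : Stable I M) (hM' : Stable I M') :
    mmeet hM hM' = mmeet hM' hM :=
  Matching.ext' (funext fun a => omin_comm' (I := I) (a := a)
    (x := M.toFun a) (y := M'.toFun a))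

lemma mmeet_stable (hM : Stable I M) (hM' : Stable I M') : Stable I (mmeet hM hM') := by
  refine ⟨?_, ?_, ?_⟩
  · rintro ⟨a, b, hpref, x, hpart, hpB⟩
    rcases omin_eq_or (I := I) (a := a) (M.toFun a) (M'.toFun a) with e | e
    · rw [mmeet_toFun, e] at hpref
      exact mmeet_block_core hM hM' hpref x hpart hpB
    · rw [mmeet_toFun, e] at hpref
      have hpart' : inPartners I (mmeet hM' hM) b x := by
        rw [← mmeet_comm hM hM']; exact hpart
      exact mmeet_block_core hM' hM hpref x hpart' hpB
  · rintro ⟨a, h⟩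
    unfold BlocksStudent at h
    rcases omin_eq_or (I := I) (a := a) (M.toFun a) (M'.toFun a) with e | e
    · rw [mmeet_toFun, e] at h
      exact hM.2.1 ⟨a, h⟩
    · rw [mmeet_toFun, e] at h
      exact hM'.2.1 ⟨a, h⟩
  · rintro ⟨b, a, he, hpB⟩
    rcases omin_eq_some_iff.1 he with h | h | h
    · exact hM.2.2 ⟨b, a, (mem_iSet.1 h).1, hpB⟩
    · exact hM.2.2 ⟨b, a, (mem_tSet.1 h).1, hpB⟩
    · exact hM'.2.2 ⟨b, a, (mem_tSet.1 h).1, hpB⟩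

lemma mjoin_isJoin (hM : Stable I M) (hM' : Stable I M') :
    IsJoin I M M' (mjoin hM hM') := by
  refine ⟨mjoin_stable hM hM', fun a => wge_omax_left _ _, fun a => wge_omax_right _ _,
    fun P _ h1 h2 => fun a => omax_le (h1 a) (h2 a)⟩

lemma mmeet_isMeet (hM : Stable I M) (hM' : Stable I M') :
    IsMeet I M M' (mmeet hM hM') := by
  refine ⟨mmeet_stable hM hM', fun a => wge_omin_left _ _, fun a => wge_omin_right _ _,
    fun P _ h1 h2 => fun a => omin_ge (h1 a) (h2 a)⟩

lemma isMeet_unique {N N' : Matching I} (h : IsMeet I M M' N) (h' : IsMeet I M M' N') :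
    N = N' :=
  matGE_antisymm (h.2.2.2 N' h'.1 h'.2.1 h'.2.2.1) (h'.2.2.2 N h.1 h.2.1 h.2.2.1)

lemma isJoin_unique {N N' : Matching I} (h : IsJoin I M M' N) (h' : IsJoin I M M' N') :
    N = N' :=
  matGE_antisymm (h'.2.2.2 N h.1 h.2.1 h.2.2.1) (h.2.2.2 N' h'.1 h'.2.1 h'.2.2.1)

end JoinMeet


/-! ### Chains of stable matchings -/

section Chains

variable {I : SchoolInstance A B}

instance : Finite (Matching I) :=
  Finite.of_injective (fun M => M.toFun) fun _ _ h => Matching.ext' h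

lemma matching_ne_of_toFun_ne {X Y : Matching I} (h : X ≠ Y) : X.toFun ≠ Y.toFun :=
  fun hh => h (Matching.ext' hh)

lemma exists_maximal_matGE :
    ∀ (n : ℕ) (S : Set (Matching I)), S.ncard ≤ n → S.Nonempty →
      ∃ U ∈ S, ∀ P ∈ S, matGE I P U → P = U := by
  intro n
  induction n with
  | zero =>
    intro S hcard hne
    have := (Set.ncard_pos (Set.toFinite S)).2 hne
    omega
  | succ n ih =>
    intro S hcard hne
    obtain ⟨u, hu⟩ := hne
    by_cases hmax : ∀ P ∈ S, matGE I P u → P = u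
    · exact ⟨u, hu, hmax⟩
    · push_neg at hmax
      obtain ⟨P0, hP0S, hP0ge, hP0ne⟩ := hmax
      have hne' : {P | P ∈ S ∧ matGE I P u ∧ P ≠ u}.Nonempty := ⟨P0, hP0S, hP0ge, hP0ne⟩
      have hsub : {P | P ∈ S ∧ matGE I P u ∧ P ≠ u} ⊆ S := fun P hP => hP.1
      have hssub : {P | P ∈ S ∧ matGE I P u ∧ P ≠ u} ⊂ S := by
        refine ⟨hsub, fun hss => ?_⟩
        exact (hss hu).2.2 rfl
      have hcard' : {P | P ∈ S ∧ matGE I P u ∧ P ≠ u}.ncard ≤ n := by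
        have := Set.ncard_lt_ncard hssub (Set.toFinite S)
        omega
      obtain ⟨U, hUS, hUmax⟩ := ih _ hcard' hne'
      refine ⟨U, hsub hUS, fun P hP hPU => ?_⟩
      have hPu : matGE I P u := matGE_trans hPU hUS.2.1
      by_cases hPequ : P = u
      · subst hPequ
        exact (matGE_antisymm hUS.2.1 hPU).symm
      · exact hUmax P ⟨hP, hPu, hPequ⟩ hPU

/-- The interval of stable matchings between `X` and `Y`. -/
def seg (I : SchoolInstance A B) (X Y : Matching I) : Set (Matching I) :=
  {P | Stable I P ∧ matGE I X P ∧ matGE I P Y}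

lemma exists_chainTo_aux :
    ∀ (n : ℕ) (X Y : Matching I), (seg I X Y).ncard ≤ n → Stable I X → Stable I Y →
      matGE I X Y → ∃ c, chainTo I X Y c := by
  intro n
  induction n with
  | zero =>
    intro X Y hcard hX hY hXY
    have hXseg : X ∈ seg I X Y := ⟨hX, matGE_refl X, hXY⟩
    have := (Set.ncard_pos (Set.toFinite (seg I X Y))).2 ⟨X, hXseg⟩
    omega
  | succ n ih =>
    intro X Y hcard hX hY hXY
    by_cases hXY' : X = Y
    · subst hXY'
      exact ⟨[X], rfl, rfl, by intro N hN; simp at hN; subst hN; exact hX,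
        List.isChain_singleton X⟩
    · set S : Set (Matching I) := {P | Stable I P ∧ matGE I X P ∧ matGE I P Y ∧ P ≠ X}
        with hS
      have hYS : Y ∈ S := ⟨hY, hXY, matGE_refl Y, fun h => hXY' h.symm⟩
      obtain ⟨U, hUS, hUmax⟩ := exists_maximal_matGE (S.ncard) S le_rfl ⟨Y, hYS⟩
      have hUimm : ImmPred I U X := by
        refine ⟨hUS.1, hX, ⟨hUS.2.1, matching_ne_of_toFun_ne hUS.2.2.2⟩, ?_⟩
        rintro ⟨P, hPstable, ⟨hPU, hUPne⟩, ⟨hXP, hPXne⟩⟩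
        have hPS : P ∈ S := ⟨hPstable, hXP, matGE_trans hPU hUS.2.2.1,
          fun h => hPXne (congrArg Matching.toFun h)⟩
        exact hUPne (congrArg Matching.toFun (hUmax P hPS hPU)).symm
      have hsegsub : seg I U Y ⊆ seg I X Y :=
        fun P hP => ⟨hP.1, matGE_trans hUS.2.1 hP.2.1, hP.2.2⟩
      have hXnot : X ∉ seg I U Y := by
        rintro ⟨-, hUX, -⟩
        exact hUS.2.2.2 (matGE_antisymm hUX hUS.2.1)
      have hcard' : (seg I U Y).ncard ≤ n := by
        have hss : seg I U Y ⊂ seg I X Y :=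
          ⟨hsegsub, fun hss => hXnot (hss ⟨hX, matGE_refl X, hXY⟩)⟩
        have := Set.ncard_lt_ncard hss (Set.toFinite (seg I X Y))
        omega
      obtain ⟨c', hc'⟩ := ih U Y hcard' hUS.1 hY hUS.2.2.1
      obtain ⟨h1, h2, h3, h4⟩ := hc'
      rcases c' with _ | ⟨W, rest⟩
      · simp at h1
      · have hWU : W = U := by simpa using h1
        subst hWU
        refine ⟨X :: W :: rest, rfl, ?_, ?_, ?_⟩
        · rw [List.getLast?_cons_cons]
          exact h2
        · intro N hN
          rcases List.mem_cons.1 hN with rfl | hN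
          · exact hX
          · exact h3 N hN
        · unfold List.Chain'; rw [List.isChain_cons_cons]
          exact ⟨hUimm, h4⟩

lemma exists_chainTo {X Y : Matching I} (hX : Stable I X) (hY : Stable I Y)
    (hXY : matGE I X Y) : ∃ c, chainTo I X Y c :=
  exists_chainTo_aux (seg I X Y).ncard X Y le_rfl hX hY hXY

/-! chainRots and chainTo structural lemmas -/

lemma chainRots_nil : chainRots I [] = ∅ := by
  ext r
  simp [chainRots]

lemma chainRots_single (X : Matching I) : chainRots I [X] = ∅ := by
  ext r
  simp only [chainRots, Set.mem_setOf_eq, Set.mem_empty_iff_false, iff_false]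
  rintro ⟨i, U, V, h1, h2, -⟩
  rcases i with _ | i <;> simp at h1 h2

lemma chainRots_cons_cons (X Y : Matching I) (l : List (Matching I)) :
    chainRots I (X :: Y :: l) = insert (rho I X Y) (chainRots I (Y :: l)) := by
  ext r
  simp only [chainRots, Set.mem_setOf_eq, Set.mem_insert_iff]
  constructor
  · rintro ⟨i, U, V, h1, h2, rfl⟩
    rcases i with _ | i
    · simp at h1 h2
      subst h1; subst h2
      exact Or.inl rfl
    · right
      refine ⟨i, U, V, ?_, ?_, rfl⟩
      · simpa using h1
      · simpa using h2
  · rintro (rfl | ⟨i, U, V, h1, h2, rfl⟩)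
    · exact ⟨0, X, Y, by simp, by simp, rfl⟩
    · exact ⟨i + 1, U, V, by simpa using h1, by simpa using h2, rfl⟩

lemma chainTo_head {X Y Z : Matching I} {l : List (Matching I)}
    (h : chainTo I X Y (Z :: l)) : Z = X := by
  have := h.1
  simpa using this

lemma chainTo_cons_cons {X Y Z W : Matching I} {l : List (Matching I)}
    (h : chainTo I X Y (Z :: W :: l)) :
    Z = X ∧ ImmPred I W Z ∧ chainTo I W Y (W :: l) := by
  obtain ⟨h1, h2, h3, h4⟩ := h
  have hZ : Z = X := by simpa using h1
  unfold List.Chain' at h4; rw [List.isChain_cons_cons] at h4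
  refine ⟨hZ, h4.1, rfl, ?_, ?_, h4.2⟩
  · rw [List.getLast?_cons_cons] at h2
    exact h2
  · intro N hN
    exact h3 N (List.mem_cons_of_mem Z hN)

lemma chainTo_single {X Y Z : Matching I} (h : chainTo I X Y [Z]) : X = Y ∧ Z = X := by
  have h1 : Z = X := chainTo_head h
  have h2 : Z = Y := by simpa using h.2.1
  exact ⟨h1 ▸ h2.symm ▸ rfl, h1⟩

lemma chainTo_matGE : ∀ {c : List (Matching I)} {X Y : Matching I},
    chainTo I X Y c → matGE I X Y := by
  intro c
  induction c with
  | nil => intro X Y h; exact absurd h.1 (by simp)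
  | cons Z l ih =>
    intro X Y h
    rcases l with _ | ⟨W, rest⟩
    · rcases chainTo_single h with ⟨rfl, -⟩
      exact matGE_refl X
    · obtain ⟨rfl, himm, hrest⟩ := chainTo_cons_cons h
      exact matGE_trans himm.2.2.1.1 (ih hrest)

lemma chainRots_spec : ∀ {c : List (Matching I)} {X Y : Matching I},
    chainTo I X Y c → ∀ r ∈ chainRots I c,
      ∃ U U', Stable I U ∧ Stable I U' ∧ ImmPred I U' U ∧ r = rho I U U' ∧
        matGE I X U ∧ matGE I U' Y := by
  intro c
  induction c with
  | nil => intro X Y h; exact absurd h.1 (by simp)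
  | cons Z l ih =>
    intro X Y h r hr
    rcases l with _ | ⟨W, rest⟩
    · rw [chainRots_single] at hr
      exact absurd hr (Set.notMem_empty r)
    · obtain ⟨rfl, himm, hrest⟩ := chainTo_cons_cons h
      rw [chainRots_cons_cons] at hr
      rcases hr with rfl | hr
      · exact ⟨Z, W, himm.2.1, himm.1, himm, rfl, matGE_refl Z, chainTo_matGE hrest⟩
      · obtain ⟨U, U', hU, hU', himm', hrho, hWU, hU'Y⟩ := ih hrest r hr
        exact ⟨U, U', hU, hU', himm', hrho, matGE_trans himm.2.2.1.1 hWU, hU'Y⟩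

lemma chainTo_append : ∀ {c₁ c₂ : List (Matching I)} {X Y Z : Matching I},
    chainTo I X Y c₁ → chainTo I Y Z c₂ →
      chainTo I X Z (c₁ ++ c₂.tail) ∧
        chainRots I (c₁ ++ c₂.tail) = chainRots I c₁ ∪ chainRots I c₂ := by
  intro c₁
  induction c₁ with
  | nil => intro c₂ X Y Z h1 h2; exact absurd h1.1 (by simp)
  | cons V l ih =>
    intro c₂ X Y Z h1 h2
    rcases l with _ | ⟨W, rest⟩
    · obtain ⟨hXY, hVX⟩ := chainTo_single h1
      rcases c₂ with _ | ⟨Y', t⟩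
      · exact absurd h2.1 (by simp)
      · have hY' : Y' = Y := chainTo_head h2
        have hlist : (([V] ++ (Y' :: t).tail : List (Matching I))) = Y' :: t := by
          show (V :: t : List (Matching I)) = Y' :: t
          rw [hVX, hXY, hY']
        constructor
        · rw [hlist, hXY]
          exact h2
        · rw [hlist]
          have h0 : chainRots I [V] = ∅ := chainRots_single V
          rw [h0, Set.empty_union]
    · obtain ⟨hVX, himm, hrest⟩ := chainTo_cons_cons h1
      obtain ⟨hchain, hrots⟩ := ih hrest h2
      have hlist : ((V :: W :: rest) ++ c₂.tail : List (Matching I))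
          = V :: W :: (rest ++ c₂.tail) := rfl
      constructor
      · refine ⟨by simp [hVX], ?_, ?_, ?_⟩
        · rw [hlist, List.getLast?_cons_cons]
          exact hchain.2.1
        · intro N hN
          rw [hlist] at hN
          rcases List.mem_cons.1 hN with rfl | hN
          · exact himm.2.1
          · exact hchain.2.2.1 N hN
        · rw [hlist]; unfold List.Chain'; rw [List.isChain_cons_cons]
          exact ⟨himm, hchain.2.2.2⟩
      · rw [hlist, chainRots_cons_cons V W (rest ++ c₂.tail),
          chainRots_cons_cons V W rest]
        rw [show (W :: (rest ++ c₂.tail) : List (Matching I)) = (W :: rest) ++ c₂.tail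
          from rfl, hrots, Set.insert_union]

end Chains


/-! ### The rotation-set map along chains -/

section RMcalc

variable {I : SchoolInstance A B} {M0 : Matching I} {RM : Matching I → Set (Rot A B)}

/-- Abbreviation for the standing hypotheses. -/
def GoodRM (I : SchoolInstance A B) (M0 : Matching I) (RM : Matching I → Set (Rot A B)) :
    Prop :=
  (Stable I M0 ∧ ∀ N, Stable I N → matGE I M0 N) ∧
    (∀ M c, Stable I M → chainTo I M0 M c → RM M = chainRots I c)

lemma mem_pairsOf_student {M : Matching I} {a : A} {c : Option B} :
    (some a, c) ∈ pairsOf I M ↔ M.toFun a = c := by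
  simp only [pairsOf, Finset.mem_filter, Finset.mem_univ, true_and]
  constructor
  · rintro (⟨a', ha'⟩ | ⟨b, -, hb⟩)
    · rcases Prod.mk.injEq .. ▸ ha' with ⟨h1, h2⟩
      obtain rfl : a' = a := by
        have := congrArg Prod.fst ha'
        simpa using this.symm
      have := congrArg Prod.snd ha'
      simpa using this.symm
    · exact absurd (congrArg Prod.fst hb) (by simp)
  · intro h
    exact Or.inl ⟨a, by rw [h]⟩

lemma rho_fst_mem {X Y : Matching I} {a : A} (h : X.toFun a ≠ Y.toFun a) :
    (some a, X.toFun a) ∈ (rho I X Y).1 := by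
  unfold rho
  rw [Finset.mem_sdiff]
  exact ⟨mem_pairsOf_student.2 rfl, fun hc => h (mem_pairsOf_student.1 hc).symm⟩

lemma rho_snd_mem {X Y : Matching I} {a : A} (h : X.toFun a ≠ Y.toFun a) :
    (some a, Y.toFun a) ∈ (rho I X Y).2 := by
  unfold rho
  rw [Finset.mem_sdiff]
  exact ⟨mem_pairsOf_student.2 rfl, fun hc => h (mem_pairsOf_student.1 hc)⟩

lemma RM_M0 (h : GoodRM I M0 RM) : RM M0 = ∅ := by
  have hchain : chainTo I M0 M0 [M0] :=
    ⟨rfl, rfl, by intro N hN; simp at hN; subst hN; exact h.1.1, List.isChain_singleton M0⟩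
  rw [h.2 M0 [M0] h.1.1 hchain, chainRots_single]

lemma RM_union_chain (h : GoodRM I M0 RM) {X Y : Matching I} {c₂ : List (Matching I)}
    (hX : Stable I X) (hY : Stable I Y) (hc₂ : chainTo I X Y c₂) :
    RM Y = RM X ∪ chainRots I c₂ := by
  obtain ⟨c₁, hc₁⟩ := exists_chainTo h.1.1 hX (h.1.2 X hX)
  obtain ⟨hchain, hrots⟩ := chainTo_append hc₁ hc₂
  rw [h.2 Y _ hY hchain, hrots, h.2 X c₁ hX hc₁]

lemma RM_mono (h : GoodRM I M0 RM) {X Y : Matching I} (hX : Stable I X) (hY : Stable I Y)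
    (hXY : matGE I X Y) : RM X ⊆ RM Y := by
  obtain ⟨c₂, hc₂⟩ := exists_chainTo hX hY hXY
  rw [RM_union_chain h hX hY hc₂]
  exact Set.subset_union_left

lemma RM_subset_RotSet (h : GoodRM I M0 RM) {X : Matching I} (hX : Stable I X) :
    RM X ⊆ RotSet I := by
  obtain ⟨c, hc⟩ := exists_chainTo h.1.1 hX (h.1.2 X hX)
  rw [h.2 X c hX hc]
  intro r hr
  obtain ⟨U, U', -, -, himm, hrho, -, -⟩ := chainRots_spec hc r hr
  exact ⟨U, U', himm, hrho⟩

/-- The fundamental step lemma: passing to an immediate predecessor adds exactly one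
new rotation. -/
lemma RM_step (h : GoodRM I M0 RM) {X Y : Matching I} (hX : Stable I X)
    (himm : ImmPred I Y X) :
    RM Y = insert (rho I X Y) (RM X) ∧ rho I X Y ∉ RM X := by
  have hY : Stable I Y := himm.1
  have hc₂ : chainTo I X Y [X, Y] := by
    refine ⟨rfl, rfl, ?_, ?_⟩
    · intro N hN
      rcases List.mem_cons.1 hN with rfl | hN
      · exact hX
      · simp at hN; subst hN; exact hY
    · unfold List.Chain'; rw [List.isChain_cons_cons]
      exact ⟨himm, List.isChain_singleton Y⟩
  have hnotmem : rho I X Y ∉ RM X := by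
    intro hmem
    obtain ⟨c₁, hc₁⟩ := exists_chainTo h.1.1 hX (h.1.2 X hX)
    rw [h.2 X c₁ hX hc₁] at hmem
    obtain ⟨U, U', -, -, himm', hrho, -, hU'X⟩ := chainRots_spec hc₁ _ hmem
    obtain ⟨a, ha⟩ := Function.ne_iff.1 himm.2.2.1.2
    have hXa : X.toFun a ≠ Y.toFun a := fun hh => ha hh.symm
    have h1 : (some a, X.toFun a) ∈ (rho I U U').1 := by
      rw [← hrho]; exact rho_fst_mem hXa
    have h2 : (some a, Y.toFun a) ∈ (rho I U U').2 := by
      rw [← hrho]; exact rho_snd_mem hXa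
    unfold rho at h1 h2
    rw [Finset.mem_sdiff] at h1 h2
    have hUa : U.toFun a = X.toFun a := mem_pairsOf_student.1 h1.1
    have hU'a : ¬ U'.toFun a = X.toFun a := fun hc => h1.2 (mem_pairsOf_student.2 hc)
    -- the chain order forces U' a = X a, contradiction
    have hUU' : wge I a (U.toFun a) (U'.toFun a) := himm'.2.2.1.1 a
    have hU'X2 : wge I a (U'.toFun a) (X.toFun a) := hU'X a
    have : U'.toFun a = X.toFun a := by
      refine wge_antisymm hU'X2 ?_
      rw [← hUa]
      exact hUU'
    exact hU'a this
  refine ⟨?_, hnotmem⟩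
  rw [RM_union_chain h hX hY hc₂, chainRots_cons_cons, chainRots_single]
  simp [Set.union_comm]

end RMcalc


section MoreOmin

variable {I : SchoolInstance A B} {a : A}

lemma omin_eq_right {x y : Option B} (h : wge I a x y) : omin I a x y = y := by
  unfold omin; rw [if_pos h]

lemma omin_eq_left {x y : Option B} (h : wge I a y x) : omin I a x y = x := by
  unfold omin; split
  · next h' => exact (wge_antisymm h' h).symm
  · rfl

lemma omax_eq_left {x y : Option B} (h : wge I a x y) : omax I a x y = x := by
  unfold omax; rw [if_pos h]

lemma omax_eq_right {x y : Option B} (h : wge I a y x) : omax I a x y = y := by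
  unfold omax; split
  · next h' => exact wge_antisymm h' h
  · rfl

end MoreOmin

section RMcalc2

variable {I : SchoolInstance A B} {M0 : Matching I} {RM : Matching I → Set (Rot A B)}

lemma RM_ncard_step (h : GoodRM I M0 RM) {X Y : Matching I} (hX : Stable I X)
    (himm : ImmPred I Y X) : (RM Y).ncard = (RM X).ncard + 1 := by
  obtain ⟨he, hn⟩ := RM_step h hX himm
  rw [he, Set.ncard_insert_of_notMem hn (Set.toFinite _)]

lemma RM_exists_new (h : GoodRM I M0 RM) {X Y : Matching I} (hX : Stable I X)
    (hY : Stable I Y) (hXY : matGE I X Y) (hne : X ≠ Y) :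
    ∃ r, r ∈ RM Y ∧ r ∉ RM X := by
  obtain ⟨c, hc⟩ := exists_chainTo hX hY hXY
  rcases c with _ | ⟨V, l⟩
  · exact absurd hc.1 (by simp)
  rcases l with _ | ⟨W, rest⟩
  · exact absurd (chainTo_single hc).1 hne
  · obtain ⟨hVX, himm, hrest⟩ := chainTo_cons_cons hc
    have himm' : ImmPred I W X := hVX ▸ himm
    obtain ⟨he, hn⟩ := RM_step h hX himm'
    refine ⟨rho I X W, ?_, hn⟩
    have hsub : RM W ⊆ RM Y := RM_mono h himm'.1 hY (chainTo_matGE hrest)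
    exact hsub (he ▸ Set.mem_insert _ _)

lemma cover_of_insert (h : GoodRM I M0 RM) {W V : Matching I} {r : Rot A B}
    (hW : Stable I W) (hV : Stable I V) (hWV : matGE I W V)
    (he : RM V = insert r (RM W)) (hn : r ∉ RM W) :
    ImmPred I V W ∧ rho I W V = r := by
  have hne : W ≠ V := by
    rintro rfl
    have : r ∈ RM W := by rw [he]; exact Set.mem_insert r _
    exact hn this
  have himm : ImmPred I V W := by
    refine ⟨hV, hW, ⟨hWV, matching_ne_of_toFun_ne (Ne.symm hne)⟩, ?_⟩
    rintro ⟨P, hP, ⟨hPV, hVPne⟩, ⟨hWP, hPWne⟩⟩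
    obtain ⟨r1, hr1P, hr1W⟩ := RM_exists_new h hW hP hWP
      (fun e => hPWne (congrArg Matching.toFun e.symm))
    obtain ⟨r2, hr2V, hr2P⟩ := RM_exists_new h hP hV hPV
      (fun e => hVPne (congrArg Matching.toFun e.symm))
    have hsub1 : RM W ⊆ RM P := RM_mono h hW hP hWP
    have hsub2 : RM P ⊆ RM V := RM_mono h hP hV hPV
    have hr2r : r2 = r := by
      rcases (he ▸ hr2V : r2 ∈ insert r (RM W)) with h' | h'
      · exact h'
      · exact absurd (hsub1 h') hr2P
    have hr1r : r1 = r := by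
      rcases (he ▸ hsub2 hr1P : r1 ∈ insert r (RM W)) with h' | h'
      · exact h'
      · exact absurd h' hr1W
    rw [hr1r, ← hr2r] at hr1P
    exact hr2P hr1P
  obtain ⟨he2, -⟩ := RM_step h hW himm
  have hr : r = rho I W V := by
    have hmem : r ∈ RM V := by rw [he]; exact Set.mem_insert r _
    rw [he2] at hmem
    rcases hmem with h' | h'
    · exact h'
    · exact absurd h' hn
  exact ⟨himm, hr.symm⟩

lemma exists_cover_above_aux : ∀ (c : List (Matching I)) (X Z : Matching I),
    chainTo I X Z c → X ≠ Z → ∃ Z', ImmPred I Z Z' := by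
  intro c
  induction c with
  | nil =>
    intro X Z hc _
    exact absurd hc.1 (by simp)
  | cons V l ih =>
    intro X Z hc hne
    rcases l with _ | ⟨W, rest⟩
    · exact absurd (chainTo_single hc).1 hne
    · obtain ⟨hVX, himm, hrest⟩ := chainTo_cons_cons hc
      by_cases hWZ : W = Z
      · subst hWZ
        exact ⟨V, himm⟩
      · exact ih W Z hrest hWZ

lemma exists_cover_above (h : GoodRM I M0 RM) {Z : Matching I} (hZ : Stable I Z)
    (hne : Z ≠ M0) : ∃ Z', Stable I Z' ∧ ImmPred I Z Z' := by
  obtain ⟨c, hc⟩ := exists_chainTo h.1.1 hZ (h.1.2 Z hZ)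
  obtain ⟨Z', hZ'⟩ := exists_cover_above_aux c M0 Z hc (fun e => hne e.symm)
  exact ⟨Z', hZ'.2.1, hZ'⟩

/-- Exchange lemma, first half: if the rotation of the cover `Z' ⋗ Z` has already been
eliminated in `W' ≤ Z'`, then `W' ≤ Z`. -/
lemma DEXi (h : GoodRM I M0 RM) {Z Z' W' : Matching I} (hW' : Stable I W')
    (himm : ImmPred I Z Z') (hZ'W' : matGE I Z' W')
    (hr : rho I Z' Z ∈ RM W') : matGE I Z W' := by
  obtain ⟨c, hc⟩ := exists_chainTo h.1.1 hW' (h.1.2 W' hW')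
  rw [h.2 W' c hW' hc] at hr
  obtain ⟨U, U', -, -, himm', hrho, -, hU'W'⟩ := chainRots_spec hc _ hr
  intro a
  by_cases hmoved : Z'.toFun a = Z.toFun a
  · rw [← hmoved]
    exact hZ'W' a
  · have h2 := rho_snd_mem (I := I) (X := Z') (Y := Z) hmoved
    rw [hrho] at h2
    unfold rho at h2
    rw [Finset.mem_sdiff] at h2
    have hU'a : U'.toFun a = Z.toFun a := mem_pairsOf_student.1 h2.1
    rw [← hU'a]
    exact hU'W' a

/-- The meet formula, by induction on the number of rotations of `Z`. -/
lemma RM_meet_aux (h : GoodRM I M0 RM) :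
    ∀ (n : ℕ) (Z : Matching I) (hZ : Stable I Z), (RM Z).ncard ≤ n →
      ∀ (M' : Matching I) (hM' : Stable I M'), RM (mmeet hM' hZ) = RM M' ∪ RM Z := by
  intro n
  induction n with
  | zero =>
    intro Z hZ hcard M' hM'
    have hempty : RM Z = ∅ := by
      have := Set.ncard_eq_zero (Set.toFinite (RM Z)) |>.1 (by omega)
      exact this
    have hZM0 : Z = M0 := by
      by_contra hne
      obtain ⟨r, hr, -⟩ := RM_exists_new h h.1.1 hZ (h.1.2 Z hZ) (fun e => hne e.symm)
      rw [hempty] at hr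
      exact hr
    subst hZM0
    have hmeet : mmeet hM' hZ = M' := by
      apply Matching.ext'
      funext a
      exact omin_eq_left (h.1.2 M' hM' a)
    rw [hmeet, hempty, Set.union_empty]
  | succ n ih =>
    intro Z hZ hcard M' hM'
    by_cases h0 : (RM Z).ncard = 0
    · exact ih Z hZ (by omega) M' hM'
    have hZM0 : Z ≠ M0 := by
      intro he
      rw [he, RM_M0 h] at h0
      simp at h0
    obtain ⟨Z', hZ', himm⟩ := exists_cover_above h hZ hZM0
    set r := rho I Z' Z with hrdef
    obtain ⟨hstep, hnot⟩ := RM_step h hZ' himm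
    have hZ'card : (RM Z').ncard ≤ n := by
      have := RM_ncard_step h hZ' himm
      omega
    have hW'rm : RM (mmeet hM' hZ') = RM M' ∪ RM Z' := ih Z' hZ' hZ'card M' hM'
    set W' := mmeet hM' hZ' with hW'def
    have hW' : Stable I W' := mmeet_stable hM' hZ'
    have hZ'W' : matGE I Z' W' := fun a => wge_omin_right _ _
    have hZ'Z : matGE I Z' Z := himm.2.2.1.1
    have hfold : mmeet hM' hZ = mmeet hW' hZ := by
      apply Matching.ext'
      funext a
      exact (omin_absorb (hZ'Z a)).symm
    rw [hfold]
    by_cases hrin : r ∈ RM W'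
    · -- first exchange case: W' ≤ Z, so the meet with Z is W' itself
      have hZW' : matGE I Z W' := DEXi h hW' himm hZ'W' hrin
      have hmeq : mmeet hW' hZ = W' := by
        apply Matching.ext'
        funext a
        exact omin_eq_left (hZW' a)
      have hrmem : r ∈ RM M' ∪ RM Z' := by
        have h' : r ∈ RM W' := hrin
        rw [hW'rm] at h'
        exact h'
      rw [hmeq, hW'rm, hstep, Set.union_insert, Set.insert_eq_of_mem hrmem]
    · -- second exchange case: the meet with Z is an immediate predecessor of W'
      set V := mmeet hW' hZ with hVdef
      have hV : Stable I V := mmeet_stable hW' hZ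
      have hW'V : matGE I W' V := fun a => wge_omin_left _ _
      have hZV : matGE I Z V := fun a => wge_omin_right _ _
      -- set up the pointwise join of W' and Z
      have hYup : matGE I Z' (mjoin hW' hZ) := fun a =>
        omax_le (hZ'W' a) (hZ'Z a)
      have hYdn : matGE I (mjoin hW' hZ) Z := fun a => wge_omax_right _ _
      have hYcases : mjoin hW' hZ = Z ∨ mjoin hW' hZ = Z' := by
        by_contra hboth
        push_neg at hboth
        exact himm.2.2.2 ⟨mjoin hW' hZ, mjoin_stable hW' hZ,
          ⟨hYdn, matching_ne_of_toFun_ne (Ne.symm hboth.1)⟩,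
          ⟨hYup, matching_ne_of_toFun_ne hboth.2⟩⟩
      have hYeq : mjoin hW' hZ = Z' := by
        rcases hYcases with hYZ | hYZ'
        · exfalso
          have hZW' : matGE I Z W' := by
            intro a
            have heq := congrFun (congrArg Matching.toFun hYZ) a
            rw [mjoin_toFun] at heq
            rw [← heq]
            exact wge_omax_left _ _
          exact hrin (RM_mono h hZ hW' hZW' (by rw [hstep]; exact Set.mem_insert r _))
        · exact hYZ'
      have hmovedW' : ∀ a, Z.toFun a ≠ Z'.toFun a → W'.toFun a = Z'.toFun a := by
        intro a hmv
        have heq := congrFun (congrArg Matching.toFun hYeq) a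
        rw [mjoin_toFun] at heq
        rcases omax_eq_or (I := I) (a := a) (W'.toFun a) (Z.toFun a) with h' | h'
        · rw [← heq, h']
        · rw [h'] at heq
          exact absurd heq hmv
      have hunmovedV : ∀ a, Z.toFun a = Z'.toFun a → V.toFun a = W'.toFun a := by
        intro a hun
        show omin I a (W'.toFun a) (Z.toFun a) = W'.toFun a
        refine omin_eq_left ?_
        rw [hun]
        exact hZ'W' a
      have hmovedV : ∀ a, Z.toFun a ≠ Z'.toFun a → V.toFun a = Z.toFun a := by
        intro a hmv
        show omin I a (W'.toFun a) (Z.toFun a) = Z.toFun a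
        refine omin_eq_right ?_
        rw [hmovedW' a hmv]
        exact hZ'Z a
      have hVne : V.toFun ≠ W'.toFun := by
        obtain ⟨a, ha⟩ := Function.ne_iff.1 himm.2.2.1.2
        have hamv : Z.toFun a ≠ Z'.toFun a := ha
        intro hcontra
        have h1 : V.toFun a = Z.toFun a := hmovedV a hamv
        have h2 : W'.toFun a = Z'.toFun a := hmovedW' a hamv
        rw [congrFun hcontra a, h2] at h1
        exact hamv h1.symm
      have himmV : ImmPred I V W' := by
        refine ⟨hV, hW', ⟨hW'V, hVne⟩, ?_⟩
        rintro ⟨P, hP, ⟨hPV, hVPne⟩, ⟨hW'P, hPW'ne⟩⟩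
        have hYP_up : matGE I Z' (mjoin hP hZ) := fun a =>
          omax_le (wge_trans (hZ'W' a) (hW'P a)) (hZ'Z a)
        have hYP_dn : matGE I (mjoin hP hZ) Z := fun a => wge_omax_right _ _
        have hYPcases : mjoin hP hZ = Z ∨ mjoin hP hZ = Z' := by
          by_contra hboth
          push_neg at hboth
          exact himm.2.2.2 ⟨mjoin hP hZ, mjoin_stable hP hZ,
            ⟨hYP_dn, matching_ne_of_toFun_ne (Ne.symm hboth.1)⟩,
            ⟨hYP_up, matching_ne_of_toFun_ne hboth.2⟩⟩
        rcases hYPcases with hYZ | hYZ'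
        · -- P ≤ Z, so P ≤ V, contradiction with V < P
          have hZP : matGE I Z P := by
            intro a
            have heq := congrFun (congrArg Matching.toFun hYZ) a
            rw [mjoin_toFun] at heq
            rw [← heq]
            exact wge_omax_left _ _
          have hVP : matGE I V P := fun a => omin_ge (matGE_wge hW'P a) (matGE_wge hZP a)
          exact hVPne (funext fun a => wge_antisymm (matGE_wge hVP a) (matGE_wge hPV a))
        · -- P = W' pointwise, contradiction
          have hPW' : P.toFun = W'.toFun := by
            funext a
            by_cases hmv : Z.toFun a = Z'.toFun a
            · -- unmoved: V a = W' a, and V ≤ P ≤ W'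
              have hVa : V.toFun a = W'.toFun a := hunmovedV a hmv
              refine wge_antisymm ?_ (matGE_wge hW'P a)
              have hh := matGE_wge hPV a
              rw [hVa] at hh
              exact hh
            · -- moved: the join forces P a = Z' a = W' a
              have heq := congrFun (congrArg Matching.toFun hYZ') a
              rw [mjoin_toFun] at heq
              rcases omax_eq_or (I := I) (a := a) (P.toFun a) (Z.toFun a) with h' | h'
              · rw [h'] at heq
                rw [heq, hmovedW' a hmv]
              · rw [h'] at heq
                exact absurd heq hmv
          exact hPW'ne hPW'
      obtain ⟨hstepV, hnotV⟩ := RM_step h hW' himmV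
      have hrV : r ∈ RM V := by
        refine RM_mono h hZ hV hZV ?_
        rw [hstep]
        exact Set.mem_insert r _
      have hreq : rho I W' V = r := by
        rw [hstepV] at hrV
        rcases hrV with h' | h'
        · exact h'.symm
        · exact absurd h' hrin
      rw [hstepV, hreq, hW'rm, hstep, Set.union_insert]

end RMcalc2


section RMfinal

variable {I : SchoolInstance A B} {M0 : Matching I} {RM : Matching I → Set (Rot A B)}

lemma RM_meet (h : GoodRM I M0 RM) {M M' : Matching I} (hM : Stable I M)
    (hM' : Stable I M') : RM (mmeet hM hM') = RM M ∪ RM M' :=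
  RM_meet_aux h (RM M').ncard M' hM' le_rfl M hM

lemma RM_inj (h : GoodRM I M0 RM) {M M' : Matching I} (hM : Stable I M)
    (hM' : Stable I M') (heq : RM M = RM M') : M = M' := by
  have h1 : RM (mmeet hM hM') = RM M := by
    rw [RM_meet h hM hM', heq, Set.union_self]
  have hMeetStable := mmeet_stable hM hM'
  have hgem : matGE I M (mmeet hM hM') := fun a => wge_omin_left _ _
  have hgem' : matGE I M' (mmeet hM hM') := fun a => wge_omin_right _ _
  have e1 : M = mmeet hM hM' := by
    by_contra hne
    obtain ⟨r, hr1, hr2⟩ := RM_exists_new h hM hMeetStable hgem hne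
    rw [h1] at hr1
    exact hr2 hr1
  have e2 : M' = mmeet hM hM' := by
    by_contra hne
    obtain ⟨r, hr1, hr2⟩ := RM_exists_new h hM' hMeetStable hgem' hne
    rw [h1, heq] at hr1
    exact hr2 hr1
  exact e1.trans e2.symm

lemma matGE_of_RM_subset (h : GoodRM I M0 RM) {P M : Matching I} (hP : Stable I P)
    (hM : Stable I M) (hsub : RM P ⊆ RM M) : matGE I P M := by
  have h1 : RM (mmeet hP hM) = RM M := by
    rw [RM_meet h hP hM, Set.union_eq_self_of_subset_left hsub]
  have hmeq : mmeet hP hM = M := RM_inj h (mmeet_stable hP hM) hM h1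
  intro a
  have e := congrFun (congrArg Matching.toFun hmeq) a
  rw [← e]
  exact wge_omin_left _ _

/-- Exchange lemma, second half (dual form): if `W ≥ Z` and the rotation of the cover
`Z' ⋗ Z` has not been eliminated in `W`, then `W ≥ Z'`. -/
lemma DEXii (h : GoodRM I M0 RM) {Z Z' W : Matching I} (hW : Stable I W)
    (himm : ImmPred I Z Z') (hWZ : matGE I W Z)
    (hr : rho I Z' Z ∉ RM W) : matGE I W Z' := by
  have hZ'st : Stable I Z' := himm.2.1
  have hZst : Stable I Z := himm.1
  have hZ'stZ : matGE I Z' Z := himm.2.2.1.1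
  have hYW : matGE I W (mmeet hW hZ'st) := fun a => wge_omin_left _ _
  have hYZ' : matGE I Z' (mmeet hW hZ'st) := fun a => wge_omin_right _ _
  have hZY : matGE I (mmeet hW hZ'st) Z := fun a => omin_ge (matGE_wge hWZ a) (matGE_wge hZ'stZ a)
  have hcases : mmeet hW hZ'st = Z ∨ mmeet hW hZ'st = Z' := by
    by_contra hboth
    push_neg at hboth
    exact himm.2.2.2 ⟨mmeet hW hZ'st, mmeet_stable hW hZ'st,
      ⟨hZY, matching_ne_of_toFun_ne (Ne.symm hboth.1)⟩,
      ⟨hYZ', matching_ne_of_toFun_ne hboth.2⟩⟩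
  rcases hcases with hc | hc
  · exfalso
    obtain ⟨hstep, hnot⟩ := RM_step h hZ'st himm
    have hmeet := RM_meet h hW hZ'st
    rw [hc] at hmeet
    have hrZ : rho I Z' Z ∈ RM Z := by
      rw [hstep]
      exact Set.mem_insert _ _
    rw [hmeet] at hrZ
    rcases hrZ with h' | h'
    · exact hr h'
    · exact hnot h'
  · rw [← hc]
    exact hYW

/-- The join formula, by induction on the number of rotations of `Z`. -/
lemma RM_join_aux (h : GoodRM I M0 RM) :
    ∀ (n : ℕ) (Z : Matching I) (hZ : Stable I Z), (RM Z).ncard ≤ n →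
      ∀ (M' : Matching I) (hM' : Stable I M'), RM (mjoin hM' hZ) = RM M' ∩ RM Z := by
  intro n
  induction n with
  | zero =>
    intro Z hZ hcard M' hM'
    have hempty : RM Z = ∅ :=
      Set.ncard_eq_zero (Set.toFinite (RM Z)) |>.1 (by omega)
    have hZM0 : Z = M0 := by
      by_contra hne
      obtain ⟨r, hr, -⟩ := RM_exists_new h h.1.1 hZ (h.1.2 Z hZ) (fun e => hne e.symm)
      rw [hempty] at hr
      exact hr
    have hjeq : mjoin hM' hZ = Z := by
      apply Matching.ext'
      funext a
      refine omax_eq_right ?_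
      have h2 : wge I a (Z.toFun a) (M'.toFun a) := by
        rw [hZM0]
        exact h.1.2 M' hM' a
      exact h2
    rw [hjeq, hempty, Set.inter_empty]
  | succ n ih =>
    intro Z hZ hcard M' hM'
    by_cases h0 : (RM Z).ncard = 0
    · exact ih Z hZ (by omega) M' hM'
    have hZM0 : Z ≠ M0 := by
      intro he
      rw [he, RM_M0 h] at h0
      simp at h0
    obtain ⟨Z', hZ'st, himm⟩ := exists_cover_above h hZ hZM0
    set r := rho I Z' Z with hrdef
    obtain ⟨hstep, hnot⟩ := RM_step h hZ'st himm
    have hZ'stcard : (RM Z').ncard ≤ n := by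
      have := RM_ncard_step h hZ'st himm
      omega
    have hG' : RM (mjoin hM' hZ'st) = RM M' ∩ RM Z' := ih Z' hZ'st hZ'stcard M' hM'
    have hZ'stZ : matGE I Z' Z := himm.2.2.1.1
    have hGst : Stable I (mjoin hM' hZ) := mjoin_stable hM' hZ
    have hG'st : Stable I (mjoin hM' hZ'st) := mjoin_stable hM' hZ'st
    have hGM' : matGE I (mjoin hM' hZ) M' := fun a => wge_omax_left _ _
    have hGZ : matGE I (mjoin hM' hZ) Z := fun a => wge_omax_right _ _
    have hG'G : matGE I (mjoin hM' hZ'st) (mjoin hM' hZ) := by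
      intro a
      refine omax_le ?_ ?_
      · exact wge_omax_left _ _
      · exact wge_trans (wge_omax_right _ _) (matGE_wge hZ'stZ a)
    by_cases hrM' : r ∈ RM M'
    · -- case r ∈ RM M'
      have hrG : r ∈ RM (mjoin hM' hZ) := by
        by_contra hrnG
        have hGZ' : matGE I (mjoin hM' hZ) Z' := DEXii h hGst himm hGZ hrnG
        have hGG' : matGE I (mjoin hM' hZ) (mjoin hM' hZ'st) := fun a =>
          omax_le (matGE_wge hGM' a) (matGE_wge hGZ' a)
        have hGeqG' : mjoin hM' hZ = mjoin hM' hZ'st := matGE_antisymm hGG' hG'G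
        have hKK' : RM (mmeet hM' hZ) = RM (mmeet hM' hZ'st) := by
          rw [RM_meet h hM' hZ, RM_meet h hM' hZ'st, hstep, Set.union_insert,
            Set.insert_eq_of_mem (Set.mem_union_left _ hrM')]
        have hKeq : mmeet hM' hZ = mmeet hM' hZ'st :=
          RM_inj h (mmeet_stable hM' hZ) (mmeet_stable hM' hZ'st) hKK'
        obtain ⟨a, ha⟩ := Function.ne_iff.1 himm.2.2.1.2
        have hKa := congrFun (congrArg Matching.toFun hKeq) a
        rw [mmeet_toFun, mmeet_toFun] at hKa
        have hwzm : wge I a (Z.toFun a) (M'.toFun a) := by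
          by_contra hc
          have hpmz : I.prefA a (M'.toFun a) (Z.toFun a) := by
            rcases wge_total (I := I) (a := a) (M'.toFun a) (Z.toFun a) with h' | h'
            · rcases h' with he | hp
              · exact absurd (Or.inl he.symm) hc
              · exact hp
            · exact absurd h' hc
          have e1 : omin I a (M'.toFun a) (Z.toFun a) = Z.toFun a :=
            omin_eq_right (Or.inr hpmz)
          rw [e1] at hKa
          rcases omin_eq_or (I := I) (a := a) (M'.toFun a) (Z'.toFun a) with h' | h'
          · rw [h'] at hKa
            exact hc (Or.inl hKa)
          · rw [h'] at hKa
            exact ha hKa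
        have hGa : (mjoin hM' hZ).toFun a = Z.toFun a := by
          rw [mjoin_toFun]
          exact omax_eq_right hwzm
        have hwge1 : wge I a ((mjoin hM' hZ'st).toFun a) (Z'.toFun a) := by
          rw [mjoin_toFun]
          exact wge_omax_right _ _
        rw [← hGeqG', hGa] at hwge1
        have hwge2 : wge I a (Z'.toFun a) (Z.toFun a) := matGE_wge hZ'stZ a
        exact ha (wge_antisymm hwge2 hwge1).symm
      refine Set.Subset.antisymm ?_ ?_
      · exact Set.subset_inter (RM_mono h hGst hM' hGM') (RM_mono h hGst hZ hGZ)
      · rintro s ⟨hsM', hsZ⟩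
        by_cases hsr : s = r
        · subst hsr
          exact hrG
        · have hsZ' : s ∈ RM Z' := by
            rw [hstep] at hsZ
            rcases hsZ with h' | h'
            · exact absurd h' hsr
            · exact h'
          have hsG' : s ∈ RM (mjoin hM' hZ'st) := by
            rw [hG']
            exact ⟨hsM', hsZ'⟩
          exact RM_mono h hG'st hGst hG'G hsG'
    · -- case r ∉ RM M'
      have hrnG : r ∉ RM (mjoin hM' hZ) :=
        fun hc => hrM' (RM_mono h hGst hM' hGM' hc)
      have hGZ' : matGE I (mjoin hM' hZ) Z' := DEXii h hGst himm hGZ hrnG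
      have hGG' : matGE I (mjoin hM' hZ) (mjoin hM' hZ'st) := fun a =>
        omax_le (matGE_wge hGM' a) (matGE_wge hGZ' a)
      have hGeq : mjoin hM' hZ = mjoin hM' hZ'st := matGE_antisymm hGG' hG'G
      rw [hGeq, hG', hstep]
      ext s
      simp only [Set.mem_inter_iff, Set.mem_insert_iff]
      constructor
      · rintro ⟨h1, h2⟩
        exact ⟨h1, Or.inr h2⟩
      · rintro ⟨h1, h2 | h2⟩
        · subst h2
          exact absurd h1 hrM'
        · exact ⟨h1, h2⟩

lemma RM_join (h : GoodRM I M0 RM) {M M' : Matching I} (hM : Stable I M)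
    (hM' : Stable I M') : RM (mjoin hM hM') = RM M ∩ RM M' :=
  RM_join_aux h (RM M').ncard M' hM' le_rfl M hM

end RMfinal


section Assembly

variable {I : SchoolInstance A B} {M0 : Matching I} {RM : Matching I → Set (Rot A B)}

lemma exposed_of_mem_RM (h : GoodRM I M0 RM) {M : Matching I} (hM : Stable I M) {r : Rot A B}
    (hr : r ∈ RM M) :
    ∃ U, Stable I U ∧ Exposed I r U ∧ RM U ⊆ RM M ∧ r ∉ RM U := by
  obtain ⟨c, hc⟩ := exists_chainTo h.1.1 hM (h.1.2 M hM)
  rw [h.2 M c hM hc] at hr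
  obtain ⟨U, U', hU, hU', himm, hrho, hXU, hU'M⟩ := chainRots_spec hc r hr
  refine ⟨U, hU, ⟨U', himm, hrho⟩, ?_, ?_⟩
  · exact RM_mono h hU hM (matGE_trans himm.2.2.1.1 hU'M)
  · rw [hrho]
    exact (RM_step h hU himm).2

lemma upperClosed_RM (h : GoodRM I M0 RM) {M : Matching I} (hM : Stable I M) :
    UpperClosed I RM (RM M) := by
  refine ⟨RM_subset_RotSet h hM, ?_⟩
  intro r' hr' r hrRot hdom
  rcases hdom with rfl | hdom
  · exact hr'
  · obtain ⟨U, hU, hexp, hsub, -⟩ := exposed_of_mem_RM h hM hr'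
    exact hsub (hdom U hU hexp)

lemma exposer_of_rotset {r : Rot A B} (hr : r ∈ RotSet I) :
    ∃ X, Stable I X ∧ Exposed I r X := by
  obtain ⟨M, M'', himm, hrho⟩ := hr
  exact ⟨M, himm.2.1, ⟨M'', himm, hrho⟩⟩

lemma not_mem_RM_of_exposed (h : GoodRM I M0 RM) {r : Rot A B} {X : Matching I}
    (hX : Stable I X) (hexp : Exposed I r X) : r ∉ RM X := by
  obtain ⟨Y, himm, hrho⟩ := hexp
  rw [hrho]
  exact (RM_step h hX himm).2

lemma domRel_trans (h : GoodRM I M0 RM) {r1 r2 r3 : Rot A B}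
    (h12 : domRel I RM r1 r2) (h23 : domRel I RM r2 r3) : domRel I RM r1 r3 := by
  rcases h12 with rfl | h12
  · exact h23
  rcases h23 with rfl | h23
  · exact Or.inr h12
  · right
    intro X hX hexp
    have hr2 : r2 ∈ RM X := h23 X hX hexp
    obtain ⟨U, hU, hexpU, hsub, -⟩ := exposed_of_mem_RM h hX hr2
    exact hsub (h12 U hU hexpU)

lemma domRel_antisymm (h : GoodRM I M0 RM) {r1 r2 : Rot A B} (hr2 : r2 ∈ RotSet I)
    (h12 : domRel I RM r1 r2) (h21 : domRel I RM r2 r1) : r1 = r2 := by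
  by_contra hne
  rcases h12 with rfl | h12
  · exact hne rfl
  rcases h21 with rfl | h21
  · exact hne rfl
  obtain ⟨X, hX, hexp⟩ := exposer_of_rotset hr2
  have hr1X : r1 ∈ RM X := h12 X hX hexp
  obtain ⟨U, hU, hexpU, hsub, -⟩ := exposed_of_mem_RM h hX hr1X
  have hmem : r2 ∈ RM X := hsub (h21 U hU hexpU)
  exact not_mem_RM_of_exposed h hX hexp hmem

lemma exists_minimal_rot (h : GoodRM I M0 RM) :
    ∀ (n : ℕ) (R : Set (Rot A B)), R.ncard ≤ n → R.Nonempty → R ⊆ RotSet I →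
      ∃ r ∈ R, ∀ r'' ∈ R, r'' ≠ r → ¬ domRel I RM r r'' := by
  intro n
  induction n with
  | zero =>
    intro R hcard hne _
    have := (Set.ncard_pos (Set.toFinite R)).2 hne
    omega
  | succ n ih =>
    intro R hcard hne hsub
    obtain ⟨r0, hr0⟩ := hne
    by_cases hgood : ∀ r'' ∈ R, r'' ≠ r0 → ¬ domRel I RM r0 r''
    · exact ⟨r0, hr0, hgood⟩
    · push_neg at hgood
      obtain ⟨r1, hr1R, hr1ne, hr1dom⟩ := hgood
      set D : Set (Rot A B) := {x | x ∈ R ∧ domRel I RM r0 x ∧ x ≠ r0} with hD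
      have hDne : D.Nonempty := ⟨r1, hr1R, hr1dom, hr1ne⟩
      have hDsub : D ⊆ R := fun x hx => hx.1
      have hDssub : D ⊂ R := by
        refine ⟨hDsub, fun hss => ?_⟩
        exact (hss hr0).2.2 rfl
      have hDcard : D.ncard ≤ n := by
        have := Set.ncard_lt_ncard hDssub (Set.toFinite R)
        omega
      obtain ⟨r, hrD, hrmin⟩ := ih D hDcard hDne (fun x hx => hsub (hDsub hx))
      refine ⟨r, hDsub hrD, ?_⟩
      intro r'' hr''R hr''ne hdom
      have hdom0 : domRel I RM r0 r'' := domRel_trans h hrD.2.1 hdom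
      by_cases hr''r0 : r'' = r0
      · subst hr''r0
        exact hrD.2.2 (domRel_antisymm h (hsub hr''R) hdom hrD.2.1)
      · exact hrmin r'' ⟨hr''R, hdom0, hr''r0⟩ hr''ne hdom

lemma exposer_join (h : GoodRM I M0 RM) {r : Rot A B} {X X' : Matching I}
    (hX : Stable I X) (hX' : Stable I X') (he : Exposed I r X) (he' : Exposed I r X') :
    Stable I (mjoin hX hX') ∧ Exposed I r (mjoin hX hX') ∧
      RM (mjoin hX hX') = RM X ∩ RM X' := by
  obtain ⟨Y, himmY, hrhoY⟩ := he
  obtain ⟨Y', himmY', hrhoY'⟩ := he'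
  have hY : Stable I Y := himmY.1
  have hY' : Stable I Y' := himmY'.1
  have hstepY := RM_step h hX himmY
  have hstepY' := RM_step h hX' himmY'
  have hJ : RM (mjoin hX hX') = RM X ∩ RM X' := RM_join h hX hX'
  have hVJ : RM (mjoin hY hY') = RM Y ∩ RM Y' := RM_join h hY hY'
  have hVJ' : RM (mjoin hY hY') = insert r (RM (mjoin hX hX')) := by
    rw [hVJ, hstepY.1, ← hrhoY, hstepY'.1, ← hrhoY', hJ]
    ext s
    simp only [Set.mem_inter_iff, Set.mem_insert_iff]
    tauto
  have hrnotJ : r ∉ RM (mjoin hX hX') := by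
    rw [hJ]
    rintro ⟨hc, -⟩
    exact (hrhoY ▸ hstepY.2) hc
  have hmono : matGE I (mjoin hX hX') (mjoin hY hY') := by
    intro a
    refine omax_le ?_ ?_
    · exact wge_trans (wge_omax_left _ _) (matGE_wge himmY.2.2.1.1 a)
    · exact wge_trans (wge_omax_right _ _) (matGE_wge himmY'.2.2.1.1 a)
  obtain ⟨himmJ, hrhoJ⟩ := cover_of_insert h (mjoin_stable hX hX') (mjoin_stable hY hY')
    hmono hVJ' hrnotJ
  exact ⟨mjoin_stable hX hX', ⟨mjoin hY hY', himmJ, hrhoJ.symm⟩, hJ⟩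

lemma exposer_min_aux (h : GoodRM I M0 RM) {r : Rot A B} :
    ∀ (n : ℕ) (S : Set (Matching I)), S.ncard ≤ n → S.Nonempty →
      (∀ X ∈ S, Stable I X ∧ Exposed I r X) →
      ∃ W, Stable I W ∧ Exposed I r W ∧ ∀ X ∈ S, ∀ hX : Stable I X, RM W ⊆ RM X := by
  intro n
  induction n with
  | zero =>
    intro S hcard hne _
    have := (Set.ncard_pos (Set.toFinite S)).2 hne
    omega
  | succ n ih =>
    intro S hcard hne hprop
    obtain ⟨x, hx⟩ := hne
    rcases Set.eq_empty_or_nonempty (S \ {x}) with hS' | hS'ne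
    · refine ⟨x, (hprop x hx).1, (hprop x hx).2, ?_⟩
      intro X hX _
      have : X = x := by
        by_contra hne'
        exact (Set.eq_empty_iff_forall_notMem.1 hS' X) ⟨hX, hne'⟩
      subst this
      exact subset_rfl
    · have hcard' : (S \ {x}).ncard ≤ n := by
        have hlt : (S \ {x}).ncard < S.ncard :=
          Set.ncard_lt_ncard (Set.sdiff_singleton_ssubset.2 hx) (Set.toFinite S)
        omega
      obtain ⟨W', hW', hexpW', hsubW'⟩ := ih (S \ {x}) hcard' hS'ne
        (fun X hX => hprop X hX.1)
      obtain ⟨hxs, hxe⟩ := hprop x hx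
      obtain ⟨hJst, hJexp, hJrm⟩ := exposer_join h hW' hxs hexpW' hxe
      refine ⟨mjoin hW' hxs, hJst, hJexp, ?_⟩
      intro X hX hXst
      by_cases hXx : X = x
      · subst hXx
        rw [hJrm]
        exact Set.inter_subset_right
      · have := hsubW' X ⟨hX, hXx⟩ hXst
        rw [hJrm]
        exact fun s hs => this (Set.inter_subset_left hs)

lemma exposer_min (h : GoodRM I M0 RM) {r : Rot A B} (hr : r ∈ RotSet I) :
    ∃ W, Stable I W ∧ Exposed I r W ∧
      ∀ X, Stable I X → Exposed I r X → RM W ⊆ RM X := by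
  set S : Set (Matching I) := {X | Stable I X ∧ Exposed I r X} with hS
  obtain ⟨X0, hX0, hexp0⟩ := exposer_of_rotset hr
  obtain ⟨W, hWst, hWexp, hWsub⟩ := exposer_min_aux h S.ncard S le_rfl ⟨X0, hX0, hexp0⟩
    (fun X hX => hX)
  exact ⟨W, hWst, hWexp, fun X hXst hXexp => hWsub X ⟨hXst, hXexp⟩ hXst⟩

lemma exists_RM_eq (h : GoodRM I M0 RM) :
    ∀ (n : ℕ) (R : Set (Rot A B)), R.ncard ≤ n → UpperClosed I RM R →
      ∃ M, Stable I M ∧ RM M = R := by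
  intro n
  induction n with
  | zero =>
    intro R hcard hUC
    have hempty : R = ∅ := Set.ncard_eq_zero (Set.toFinite R) |>.1 (by omega)
    exact ⟨M0, h.1.1, by rw [RM_M0 h, hempty]⟩
  | succ n ih =>
    intro R hcard hUC
    rcases Set.eq_empty_or_nonempty R with hempty | hne
    · exact ⟨M0, h.1.1, by rw [RM_M0 h, hempty]⟩
    obtain ⟨r, hrR, hrmin⟩ := exists_minimal_rot h R.ncard R le_rfl hne hUC.1
    have hUC' : UpperClosed I RM (R \ {r}) := by
      refine ⟨fun x hx => hUC.1 hx.1, ?_⟩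
      intro r'' hr'' s hsRot hdom
      have hsR : s ∈ R := hUC.2 r'' hr''.1 s hsRot hdom
      refine ⟨hsR, ?_⟩
      intro hsr
      rw [Set.mem_singleton_iff] at hsr
      subst hsr
      exact hrmin r'' hr''.1 hr''.2 hdom
    have hcard' : (R \ {r}).ncard ≤ n := by
      have hlt : (R \ {r}).ncard < R.ncard :=
        Set.ncard_lt_ncard (Set.sdiff_singleton_ssubset.2 hrR) (Set.toFinite R)
      omega
    obtain ⟨M', hM', hRM'⟩ := ih (R \ {r}) hcard' hUC'
    obtain ⟨W, hWst, hWexp, hWsub⟩ := exposer_min h (hUC.1 hrR)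
    have hWR' : RM W ⊆ R \ {r} := by
      intro s hs
      have hsRot : s ∈ RotSet I := RM_subset_RotSet h hWst hs
      have hsne : s ≠ r := by
        intro he
        subst he
        exact not_mem_RM_of_exposed h hWst hWexp hs
      have hdom : domRel I RM s r := Or.inr fun X hX hexp => hWsub X hX hexp hs
      exact ⟨hUC.2 r hrR s hsRot hdom, hsne⟩
    obtain ⟨Y, himmY, hrhoY⟩ := hWexp
    have hYst : Stable I Y := himmY.1
    have hstepY := RM_step h hWst himmY
    refine ⟨mmeet hM' hYst, mmeet_stable hM' hYst, ?_⟩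
    have hu : (R \ {r}) ∪ RM W = R \ {r} := Set.union_eq_self_of_subset_right hWR'
    rw [RM_meet h hM' hYst, hRM', hstepY.1, ← hrhoY, Set.union_insert, hu,
      Set.insert_diff_singleton, Set.insert_eq_of_mem hrR]

end Assembly

/-- representation with rotations. -/
theorem stmt3 (I : SchoolInstance A B) (M0 : Matching I)
    (hM0 : Stable I M0 ∧ ∀ N, Stable I N → matGE I M0 N)
    (RM : Matching I → Set (Rot A B))
    (hRM : ∀ M c, Stable I M → chainTo I M0 M c → RM M = chainRots I c) :
    (∀ M, Stable I M → UpperClosed I RM (RM M)) ∧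
    (∀ R : Set (Rot A B), UpperClosed I RM R → ∃! M, Stable I M ∧ RM M = R) ∧
    (∀ M M', Stable I M → Stable I M' →
      (∀ N, IsMeet I M M' N → RM N = RM M ∪ RM M') ∧
      (∀ N, IsJoin I M M' N → RM N = RM M ∩ RM M')) := by
  have h : GoodRM I M0 RM := ⟨hM0, hRM⟩
  refine ⟨?_, ?_, ?_⟩
  · intro M hM
    exact upperClosed_RM h hM
  · intro R hUC
    obtain ⟨M, hM, hRMeq⟩ := exists_RM_eq h R.ncard R le_rfl hUC
    refine ⟨M, ⟨hM, hRMeq⟩, ?_⟩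
    rintro M' ⟨hM', hRMeq'⟩
    exact RM_inj h hM' hM (by rw [hRMeq, hRMeq'])
  · intro M M' hM hM'
    constructor
    · intro N hN
      have he : N = mmeet hM hM' := isMeet_unique hN (mmeet_isMeet hM hM')
      rw [he, RM_meet h hM hM']
    · intro N hN
      have he : N = mjoin hM hM' := isJoin_unique hN (mjoin_isJoin hM hM')
      rw [he, RM_join h hM hM']

end SM
end
end

section
/- Let I be a school matching instance with student-pessimal stable matching M_z. Then R_{M_z} = R(I), i.e., M_z is the stable matching obtained from M_0 by eliminating all rotations of I. -/
open Classical
open scoped ENNReal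

noncomputable section

namespace SM

variable {A B : Type} [Fintype A] [Fintype B] [DecidableEq A] [DecidableEq B]

open scoped Classical

lemma matching_ext {I : SchoolInstance A B} {M N : Matching I} (h : M.toFun = N.toFun) :
    M = N := by
  cases M; cases N; simp_all

lemma matGE_trans' {I : SchoolInstance A B} {X Y Z : Matching I}
    (h1 : matGE I X Y) (h2 : matGE I Y Z) : matGE I X Z := by
  intro a
  haveI := I.prefA_sto a
  rcases h1 a with h1 | h1 <;> rcases h2 a with h2 | h2
  · exact Or.inl (h1.trans h2)
  · exact Or.inr (by rw [h1]; exact h2)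
  · exact Or.inr (by rw [h2] at h1; exact h1)
  · exact Or.inr (trans_of (I.prefA a) h1 h2)

lemma matGE_antisymm' {I : SchoolInstance A B} {X Y : Matching I}
    (h1 : matGE I X Y) (h2 : matGE I Y X) : X.toFun = Y.toFun := by
  funext a
  haveI := I.prefA_sto a
  rcases h1 a with h | h
  · exact h
  rcases h2 a with h' | h'
  · exact h'.symm
  · exact absurd (trans_of (I.prefA a) h h') (irrefl_of (I.prefA a) _)

lemma matLT_trans' {I : SchoolInstance A B} {X Y Z : Matching I}
    (h1 : matLT I X Y) (h2 : matLT I Y Z) : matLT I X Z := by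
  refine ⟨matGE_trans' h2.1 h1.1, fun he => ?_⟩
  have hYZ : matGE I Y Z := by
    intro a
    have := h1.1 a
    rw [show X.toFun a = Z.toFun a from congrFun he a] at this
    exact this
  exact h2.2 (matGE_antisymm' h2.1 hYZ).symm

/-- `fnGE g f`: pointwise, `g` weakly preferred to `f`. -/
def fnGE (I : SchoolInstance A B) (g f : A → Option B) : Prop :=
  ∀ a, g a = f a ∨ I.prefA a (g a) (f a)

lemma fnGE_of_matGE {I : SchoolInstance A B} {X Y : Matching I} (h : matGE I X Y) :
    fnGE I X.toFun Y.toFun := h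

/-- measure: number of functions weakly below `g`. -/
def fnMeasure (I : SchoolInstance A B) (g : A → Option B) : ℕ :=
  (Finset.univ.filter fun f => fnGE I g f).card

lemma fnMeasure_lt {I : SchoolInstance A B} {X Y : Matching I} (h : matLT I X Y) :
    fnMeasure I X.toFun < fnMeasure I Y.toFun := by
  apply Finset.card_lt_card
  constructor
  · intro f hf
    simp only [Finset.mem_filter, Finset.mem_univ, true_and] at hf ⊢
    intro a
    haveI := I.prefA_sto a
    rcases h.1 a with h1 | h1 <;> rcases hf a with h2 | h2
    · exact Or.inl (h1.trans h2)
    · exact Or.inr (by rw [h1]; exact h2)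
    · exact Or.inr (by rw [h2] at h1; exact h1)
    · exact Or.inr (trans_of (I.prefA a) h1 h2)
  · intro hsub
    have hYmem : Y.toFun ∈ Finset.univ.filter fun f => fnGE I Y.toFun f := by
      simp only [Finset.mem_filter, Finset.mem_univ, true_and]
      intro a; exact Or.inl rfl
    have hY := hsub hYmem
    simp only [Finset.mem_filter, Finset.mem_univ, true_and] at hY
    have hY' : matGE I X Y := hY
    exact h.2 (matGE_antisymm' hY' h.1)

/-- the set of (graphs of) stable matchings strictly between `Y` and `X`. -/
def belowSet (I : SchoolInstance A B) (X Y : Matching I) : Finset (A → Option B) :=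
  Finset.univ.filter fun g =>
    ∃ M : Matching I, M.toFun = g ∧ Stable I M ∧ matLT I M X ∧ matGE I M Y

lemma chain_exists (I : SchoolInstance A B) :
    ∀ n (X Y : Matching I), (belowSet I X Y).card ≤ n → Stable I X → Stable I Y →
    matGE I X Y →
    ∃ c : List (Matching I), c.head? = some X ∧ c.getLast? = some Y ∧
      (∀ N ∈ c, Stable I N) ∧ List.Chain' (fun P Q => ImmPred I Q P) c := by
  intro n
  induction n with
  | zero =>
    intro X Y hcard hX hY hGE
    have hXY : X = Y := by
      by_contra hne
      have hne' : Y.toFun ≠ X.toFun := fun h => hne (matching_ext h).symm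
      have : Y.toFun ∈ belowSet I X Y := by
        simp only [belowSet, Finset.mem_filter, Finset.mem_univ, true_and]
        exact ⟨Y, rfl, hY, ⟨hGE, hne'⟩, fun a => Or.inl rfl⟩
      have := Finset.card_pos.mpr ⟨_, this⟩
      omega
    exact ⟨[X], rfl, by rw [hXY]; rfl, by simp [hX], List.isChain_singleton _⟩
  | succ n ih =>
    intro X Y hcard hX hY hGE
    by_cases hXY : X = Y
    · exact ⟨[X], rfl, by rw [hXY]; rfl, by simp [hX], List.isChain_singleton _⟩
    · have hne' : Y.toFun ≠ X.toFun := fun h => hXY (matching_ext h).symm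
      have hYmem : Y.toFun ∈ belowSet I X Y := by
        simp only [belowSet, Finset.mem_filter, Finset.mem_univ, true_and]
        exact ⟨Y, rfl, hY, ⟨hGE, hne'⟩, fun a => Or.inl rfl⟩
      obtain ⟨g, hg, hgmax⟩ :=
        Finset.exists_max_image (belowSet I X Y) (fnMeasure I) ⟨_, hYmem⟩
      simp only [belowSet, Finset.mem_filter, Finset.mem_univ, true_and] at hg
      obtain ⟨M', rfl, hM's, hM'X, hM'Y⟩ := hg
      -- M' is an immediate predecessor of X
      have himm : ImmPred I M' X := by
        refine ⟨hM's, hX, hM'X, fun ⟨M'', hM''s, h1, h2⟩ => ?_⟩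
        have hmem : M''.toFun ∈ belowSet I X Y := by
          simp only [belowSet, Finset.mem_filter, Finset.mem_univ, true_and]
          exact ⟨M'', rfl, hM''s, h2, matGE_trans' h1.1 hM'Y⟩
        have hle := hgmax _ hmem
        exact absurd (fnMeasure_lt h1) (by omega)
      -- recursive step
      have hsub : belowSet I M' Y ⊆ (belowSet I X Y).erase M'.toFun := by
        intro f hf
        simp only [belowSet, Finset.mem_filter, Finset.mem_univ, true_and] at hf
        obtain ⟨M, rfl, hMs, hMlt, hMY⟩ := hf
        refine Finset.mem_erase.mpr ⟨hMlt.2, ?_⟩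
        simp only [belowSet, Finset.mem_filter, Finset.mem_univ, true_and]
        exact ⟨M, rfl, hMs, matLT_trans' hMlt hM'X, hMY⟩
      have hM'mem : M'.toFun ∈ belowSet I X Y := by
        simp only [belowSet, Finset.mem_filter, Finset.mem_univ, true_and]
        exact ⟨M', rfl, hM's, hM'X, hM'Y⟩
      have hcard' : (belowSet I M' Y).card ≤ n := by
        have h1 := Finset.card_le_card hsub
        have h2 := Finset.card_erase_of_mem hM'mem
        have h3 := Finset.card_pos.mpr ⟨_, hM'mem⟩
        omega
      obtain ⟨c', hh', hl', hs', hc'⟩ := ih M' Y hcard' hM's hY hM'Y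
      refine ⟨X :: c', rfl, ?_, ?_, ?_⟩
      · cases c' with
        | nil => simp at hh'
        | cons a l => rw [List.getLast?_cons_cons]; exact hl'
      · intro N hN
        rcases List.mem_cons.mp hN with h | h
        · exact h ▸ hX
        · exact hs' N h
      · show List.IsChain _ _
        rw [List.isChain_cons]
        refine ⟨fun y hy => ?_, hc'⟩
        rw [hh'] at hy
        cases hy
        exact himm

/-- along a maximal chain, consecutive entries are immediate predecessors. -/
lemma chain_rel {I : SchoolInstance A B} {c : List (Matching I)}
    (hc : List.Chain' (fun P Q => ImmPred I Q P) c) {i : ℕ} {X Y : Matching I}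
    (hX : getElem? c i = some X) (hY : getElem? c (i + 1) = some Y) : ImmPred I Y X := by
  obtain ⟨hi1, hXe⟩ := List.getElem?_eq_some_iff.mp hX
  obtain ⟨hi2, hYe⟩ := List.getElem?_eq_some_iff.mp hY
  have := (List.isChain_iff_getElem.mp hc) i (by omega)
  rw [hXe, hYe] at this
  exact this

/-- `R_{M_z} = R(I)`. -/
theorem stmt4 (I : SchoolInstance A B) (M0 Mz : Matching I)
    (hM0 : Stable I M0 ∧ ∀ N, Stable I N → matGE I M0 N)
    (hMz : Stable I Mz ∧ ∀ N, Stable I N → matGE I N Mz)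
    (RM : Matching I → Set (Rot A B))
    (hRM : ∀ M c, Stable I M → chainTo I M0 M c → RM M = chainRots I c) :
    RM Mz = RotSet I := by
  obtain ⟨hM0s, hM0max⟩ := hM0
  obtain ⟨hMzs, hMzmin⟩ := hMz
  obtain ⟨c1, hh1, hl1, hs1, hc1⟩ :=
    chain_exists I (belowSet I M0 Mz).card M0 Mz le_rfl hM0s hMzs (hM0max Mz hMzs)
  have hRMz : RM Mz = chainRots I c1 := hRM Mz c1 hMzs ⟨hh1, hl1, hs1, hc1⟩
  ext r
  constructor
  · intro hr
    rw [hRMz] at hr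
    obtain ⟨i, X, Y, hX, hY, hrr⟩ := hr
    exact ⟨X, Y, chain_rel hc1 hX hY, hrr⟩
  · rintro ⟨M, M', himm, hrr⟩
    obtain ⟨c2, hh2, hl2, hs2, hc2⟩ :=
      chain_exists I (belowSet I M0 M).card M0 M le_rfl hM0s himm.2.1 (hM0max M himm.2.1)
    obtain ⟨c3, hh3, hl3, hs3, hc3⟩ :=
      chain_exists I (belowSet I M' Mz).card M' Mz le_rfl himm.1 hMzs (hMzmin M' himm.1)
    have hc2ne : c2 ≠ [] := by intro h; rw [h] at hh2; simp at hh2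
    have hc3ne : c3 ≠ [] := by intro h; rw [h] at hh3; simp at hh3
    have hct : chainTo I M0 Mz (c2 ++ c3) := by
      refine ⟨?_, ?_, ?_, ?_⟩
      · rw [List.head?_append, hh2]; rfl
      · rw [List.getLast?_append, hl3]; rfl
      · intro N hN
        rcases List.mem_append.mp hN with h | h
        · exact hs2 N h
        · exact hs3 N h
      · show List.IsChain _ _
        rw [List.isChain_append]
        refine ⟨hc2, hc3, fun x hx y hy => ?_⟩
        rw [hl2] at hx; rw [hh3] at hy
        cases hx; cases hy
        exact himm
    have hRMz' : RM Mz = chainRots I (c2 ++ c3) := hRM Mz (c2 ++ c3) hMzs hct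
    rw [hRMz']
    have hlen : 1 ≤ c2.length := by
      cases c2 with
      | nil => exact absurd rfl hc2ne
      | cons a l => simp
    refine ⟨c2.length - 1, M, M', ?_, ?_, hrr⟩
    · rw [List.getElem?_append_left (by omega), ← List.getLast?_eq_getElem?, hl2]
    · have : c2.length - 1 + 1 = c2.length := by omega
      rw [this, List.getElem?_append_right le_rfl, Nat.sub_self, ← List.head?_eq_getElem?, hh3]

end SM
end
end

section
/- (Opposition of interest.) Let I be a school matching instance, let M,M'∈S(I), and let ab∈(M∖M')∩(A×B). Then either (1) M(a) ≻_a M'(a) and b prefers M'(b) to M(b), or (2) M'(a) ≻_a M(a) and b prefers M(b) to M'(b). -/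
open Classical
open scoped ENNReal

noncomputable section

namespace SM

variable {A B : Type} [Fintype A] [Fintype B] [DecidableEq A] [DecidableEq B]

/-- Students assigned to `b` in `M'` who strictly prefer `M'` to `M`. -/
def InSet (I : SchoolInstance A B) (M M' : Matching I) (b : B) : Finset A :=
  Finset.univ.filter fun a => M'.toFun a = some b ∧ I.prefA a (M'.toFun a) (M.toFun a)

/-- Students assigned to `b` in `M` who strictly prefer `M'` to `M`. -/
def OutSet (I : SchoolInstance A B) (M M' : Matching I) (b : B) : Finset A :=
  Finset.univ.filter fun a => M.toFun a = some b ∧ I.prefA a (M'.toFun a) (M.toFun a)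

lemma triA (I : SchoolInstance A B) (a : A) {x y : Option B} (h : x ≠ y) :
    I.prefA a x y ∨ I.prefA a y x := by
  haveI := I.prefA_sto a
  rcases trichotomous_of (I.prefA a) x y with h1 | h1 | h1
  · exact Or.inl h1
  · exact absurd h1 h
  · exact Or.inr h1

lemma triB (I : SchoolInstance A B) (b : B) {x y : Option A} (h : x ≠ y) :
    I.prefB b x y ∨ I.prefB b y x := by
  haveI := I.prefB_sto b
  rcases trichotomous_of (I.prefB b) x y with h1 | h1 | h1
  · exact Or.inl h1
  · exact absurd h1 h
  · exact Or.inr h1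

lemma asymmB (I : SchoolInstance A B) (b : B) {x y : Option A}
    (h1 : I.prefB b x y) (h2 : I.prefB b y x) : False := by
  haveI := I.prefB_sto b
  exact irrefl_of (I.prefB b) x (trans_of (I.prefB b) h1 h2)

lemma irreflA (I : SchoolInstance A B) (a : A) {x : Option B} (h : I.prefA a x x) : False := by
  haveI := I.prefA_sto a
  exact irrefl_of (I.prefA a) x h

/-- Claim A: if `a` strictly prefers its school `d` in `M'` to its match in `M`,
then (by stability of `M` and `M'`) `d` is full in `M` and every student matched
to `d` in `M` is preferred by `d` to `a`. -/
lemma claimA (I : SchoolInstance A B) (M M' : Matching I)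
    (hM : Stable I M) (hM' : Stable I M') (a : A) (d : B)
    (h1 : M'.toFun a = some d) (h2 : I.prefA a (some d) (M.toFun a)) :
    I.q d ≤ (assignedTo I M d).card ∧
      ∀ a', M.toFun a' = some d → I.prefB d (some a') (some a) := by
  have hnb : ¬ BlocksPair I M a d := fun h => hM.1 ⟨a, d, h⟩
  have hnx : ∀ x, inPartners I M d x → ¬ I.prefB d (some a) x := by
    intro x hx hp
    exact hnb ⟨h2, x, hx, hp⟩
  have hMad : M.toFun a ≠ some d := by
    intro h
    rw [h] at h2
    exact irreflA I a h2
  have haout : I.prefB d (some a) none := by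
    have hns : ¬ I.prefB d none (some a) := by
      intro hp
      exact hM'.2.2 ⟨d, a, h1, hp⟩
    rcases triB I d (x := (some a : Option A)) (y := none) (by simp) with h | h
    · exact h
    · exact absurd h hns
  constructor
  · by_contra hlt
    have hslack : hasSlack I M d := lt_of_not_ge hlt
    exact hnx none (Or.inr ⟨rfl, hslack⟩) haout
  · intro a' ha'
    have hne : (some a' : Option A) ≠ some a := by
      intro h
      rw [Option.some_inj] at h
      subst h
      exact hMad ha'
    have hnp := hnx (some a') (Or.inl ⟨a', rfl, ha'⟩)
    rcases triB I d hne with h | h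
    · exact h
    · exact absurd h hnp

/-- At a given school `d` there cannot be both a student entering `d` (from `M`
to `M'`) who improves and a student leaving `d` who improves. -/
lemma noBoth (I : SchoolInstance A B) (M M' : Matching I)
    (hM : Stable I M) (hM' : Stable I M') (d : B)
    (h1 : (InSet I M M' d).Nonempty) (h2 : (InSet I M' M d).Nonempty) : False := by
  obtain ⟨s, hs⟩ := h1
  obtain ⟨t, ht⟩ := h2
  rw [InSet, Finset.mem_filter] at hs ht
  obtain ⟨-, hs1, hs2⟩ := hs
  obtain ⟨-, ht1, ht2⟩ := ht
  rw [hs1] at hs2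
  rw [ht1] at ht2
  have hA := (claimA I M M' hM hM' s d hs1 hs2).2 t ht1
  have hB := (claimA I M' M hM' hM t d ht1 ht2).2 s hs1
  exact asymmB I d hA hB

lemma assigned_card_le (I : SchoolInstance A B) (M : Matching I) (d : B) :
    (assignedTo I M d).card ≤ I.q d := by
  have h := M.quota d
  unfold assignedTo
  convert h using 2
  congr!

lemma le_lemma (I : SchoolInstance A B) (M M' : Matching I)
    (hM : Stable I M) (hM' : Stable I M') (d : B) :
    (InSet I M M' d).card ≤ (OutSet I M M' d).card := by
  rcases (InSet I M M' d).eq_empty_or_nonempty with h | hne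
  · simp [h]
  obtain ⟨s, hs⟩ := hne
  rw [InSet, Finset.mem_filter] at hs
  obtain ⟨-, hs1, hs2⟩ := hs
  rw [hs1] at hs2
  have hfull := (claimA I M M' hM hM' s d hs1 hs2).1
  have hcard : (assignedTo I M' d).card ≤ (assignedTo I M d).card :=
    le_trans (assigned_card_le I M' d) hfull
  have hsub1 : InSet I M M' d ⊆ assignedTo I M' d \ assignedTo I M d := by
    intro a ha
    rw [InSet, Finset.mem_filter] at ha
    obtain ⟨-, ha1, ha2⟩ := ha
    rw [Finset.mem_sdiff]
    constructor
    · simp [assignedTo, ha1]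
    · simp only [assignedTo, Finset.mem_filter, Finset.mem_univ, true_and]
      intro hMa
      rw [ha1, hMa] at ha2
      exact irreflA I a ha2
  have hsub2 : assignedTo I M d \ assignedTo I M' d ⊆ OutSet I M M' d := by
    intro a ha
    rw [Finset.mem_sdiff] at ha
    obtain ⟨ha1, ha2⟩ := ha
    simp only [assignedTo, Finset.mem_filter, Finset.mem_univ, true_and] at ha1 ha2
    rw [OutSet, Finset.mem_filter]
    refine ⟨Finset.mem_univ a, ha1, ?_⟩
    have hne : M'.toFun a ≠ M.toFun a := by
      rw [ha1]; exact ha2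
    rcases triA I a hne with h | h
    · exact h
    · exfalso
      refine noBoth I M M' hM hM' d ⟨s, ?_⟩ ⟨a, ?_⟩
      · rw [InSet, Finset.mem_filter, hs1]
        exact ⟨Finset.mem_univ s, rfl, hs2⟩
      · rw [InSet, Finset.mem_filter]
        exact ⟨Finset.mem_univ a, ha1, h⟩
  have h1 : (InSet I M M' d).card ≤ (assignedTo I M' d \ assignedTo I M d).card :=
    Finset.card_le_card hsub1
  have h2 : (assignedTo I M' d \ assignedTo I M d).card ≤
      (assignedTo I M d \ assignedTo I M' d).card := by
    have e1 := Finset.card_sdiff_add_card_inter (assignedTo I M' d) (assignedTo I M d)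
    have e2 := Finset.card_sdiff_add_card_inter (assignedTo I M d) (assignedTo I M' d)
    have e3 : (assignedTo I M' d ∩ assignedTo I M d) = (assignedTo I M d ∩ assignedTo I M' d) :=
      Finset.inter_comm _ _
    rw [e3] at e1
    omega
  have h3 : (assignedTo I M d \ assignedTo I M' d).card ≤ (OutSet I M M' d).card :=
    Finset.card_le_card hsub2
  omega

/-- The key counting equality: at every school, the number of improving
entrants equals the number of improving leavers. -/
lemma cardEq (I : SchoolInstance A B) (M M' : Matching I)
    (hM : Stable I M) (hM' : Stable I M') (d : B) :
    (InSet I M M' d).card = (OutSet I M M' d).card := by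
  classical
  set Sfin : Finset A :=
    Finset.univ.filter (fun a => I.prefA a (M'.toFun a) (M.toFun a)) with hSfin
  have hdisjIn : ∀ x ∈ (Finset.univ : Finset B), ∀ y ∈ (Finset.univ : Finset B), x ≠ y →
      Disjoint (InSet I M M' x) (InSet I M M' y) := by
    intro x _ y _ hxy
    rw [Finset.disjoint_left]
    intro a hax hay
    rw [InSet, Finset.mem_filter] at hax hay
    exact hxy (by rw [← Option.some_inj, ← hax.2.1, ← hay.2.1])
  have hdisjOut : ∀ x ∈ (Finset.univ : Finset B), ∀ y ∈ (Finset.univ : Finset B), x ≠ y →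
      Disjoint (OutSet I M M' x) (OutSet I M M' y) := by
    intro x _ y _ hxy
    rw [Finset.disjoint_left]
    intro a hax hay
    rw [OutSet, Finset.mem_filter] at hax hay
    exact hxy (by rw [← Option.some_inj, ← hax.2.1, ← hay.2.1])
  have hbiIn : Finset.univ.biUnion (InSet I M M') = Sfin := by
    ext a
    rw [Finset.mem_biUnion]
    constructor
    · rintro ⟨d', -, hd'⟩
      rw [InSet, Finset.mem_filter] at hd'
      rw [hSfin, Finset.mem_filter]
      exact ⟨Finset.mem_univ a, hd'.2.2⟩
    · intro ha
      rw [hSfin, Finset.mem_filter] at ha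
      have hnn : M'.toFun a ≠ none := by
        intro hn
        have h2 := ha.2
        rw [hn] at h2
        exact hM.2.1 ⟨a, h2⟩
      obtain ⟨d', hd'⟩ := Option.ne_none_iff_exists'.1 hnn
      refine ⟨d', Finset.mem_univ d', ?_⟩
      rw [InSet, Finset.mem_filter]
      exact ⟨Finset.mem_univ a, hd', ha.2⟩
  have hbiOut : Finset.univ.biUnion (OutSet I M M') ⊆ Sfin := by
    intro a ha
    rw [Finset.mem_biUnion] at ha
    obtain ⟨d', -, hd'⟩ := ha
    rw [OutSet, Finset.mem_filter] at hd'
    rw [hSfin, Finset.mem_filter]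
    exact ⟨Finset.mem_univ a, hd'.2.2⟩
  have hsumIn : ∑ d' : B, (InSet I M M' d').card = Sfin.card := by
    rw [← Finset.card_biUnion hdisjIn, hbiIn]
  have hsumOut : ∑ d' : B, (OutSet I M M' d').card ≤ Sfin.card := by
    rw [← Finset.card_biUnion hdisjOut]
    exact Finset.card_le_card hbiOut
  have hle : ∀ d' ∈ (Finset.univ : Finset B),
      (InSet I M M' d').card ≤ (OutSet I M M' d').card :=
    fun d' _ => le_lemma I M M' hM hM' d'
  have hsum : ∑ d' : B, (InSet I M M' d').card = ∑ d' : B, (OutSet I M M' d').card :=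
    le_antisymm (Finset.sum_le_sum hle) (by omega)
  exact (Finset.sum_eq_sum_iff_of_le hle).1 hsum d (Finset.mem_univ d)

/-- opposition of interest. -/
theorem stmt12 (I : SchoolInstance A B) (M M' : Matching I)
    (hM : Stable I M) (hM' : Stable I M')
    (a : A) (b : B) (hab : M.toFun a = some b) (hab' : M'.toFun a ≠ some b) :
    (I.prefA a (M.toFun a) (M'.toFun a) ∧
      prefersSet I b (partnersSet I M' b) (partnersSet I M b)) ∨
    (I.prefA a (M'.toFun a) (M.toFun a) ∧
      prefersSet I b (partnersSet I M b) (partnersSet I M' b)) := by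
  have hMne : M.toFun a ≠ M'.toFun a := by
    rw [hab]; exact fun h => hab' h.symm
  rcases triA I a hMne with hT | hS
  · -- Case 1 : `a` prefers `M`; show `b` prefers `M'(b)` to `M(b)`.
    left
    refine ⟨hT, ?_⟩
    have hT' : I.prefA a (some b) (M'.toFun a) := by rw [← hab]; exact hT
    have haIn : a ∈ InSet I M' M b := by
      rw [InSet, Finset.mem_filter]
      exact ⟨Finset.mem_univ a, hab, hT⟩
    have hfull' := (claimA I M' M hM' hM a b hab hT').1
    have hOutSempty : OutSet I M M' b = ∅ := by
      have h0 : InSet I M M' b = ∅ := by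
        rw [← Finset.not_nonempty_iff_eq_empty]
        intro hne
        exact noBoth I M M' hM hM' b hne ⟨a, haIn⟩
      have := cardEq I M M' hM hM' b
      rw [h0, Finset.card_empty] at this
      exact Finset.card_eq_zero.1 this.symm
    intro x hx y hy hyn
    rcases hx with ⟨x', rfl, hx'⟩ | ⟨rfl, hslack'⟩
    · rcases hy with ⟨y', rfl, hy'⟩ | ⟨rfl, hslackM⟩
      · -- `y'` leaves `b`; it must prefer `M` (else it is in the empty `OutSet`).
        have hy'ne : M'.toFun y' ≠ some b := by
          intro h
          exact hyn (Or.inl ⟨y', rfl, h⟩)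
        have hy'pref : I.prefA y' (some b) (M'.toFun y') := by
          have hne2 : M'.toFun y' ≠ M.toFun y' := by rw [hy']; exact hy'ne
          rcases triA I y' hne2 with h | h
          · exfalso
            have : y' ∈ OutSet I M M' b := by
              rw [OutSet, Finset.mem_filter]
              exact ⟨Finset.mem_univ y', hy', h⟩
            rw [hOutSempty] at this
            exact absurd this (Finset.notMem_empty y')
          · rw [hy'] at h; exact h
        exact (claimA I M' M hM' hM y' b hy' hy'pref).2 x' hx'
      · -- `y = ∅` : school `b` never prefers the outside option to `x' ∈ M'(b)`.
        have hns : ¬ I.prefB b none (some x') := fun hp => hM'.2.2 ⟨b, x', hx', hp⟩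
        rcases triB I b (x := (some x' : Option A)) (y := none) (by simp) with h | h
        · exact h
        · exact absurd h hns
    · -- `x = ∅ ∈ M'(b)` contradicts `b` full in `M'`.
      exact absurd hslack' (not_lt_of_ge hfull')
  · -- Case 2 : `a` prefers `M'`; show `b` prefers `M(b)` to `M'(b)`.
    right
    refine ⟨hS, ?_⟩
    have haOut : a ∈ OutSet I M M' b := by
      rw [OutSet, Finset.mem_filter]
      exact ⟨Finset.mem_univ a, hab, hS⟩
    have hInpos : 0 < (InSet I M M' b).card := by
      rw [cardEq I M M' hM hM' b]
      exact Finset.card_pos.2 ⟨a, haOut⟩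
    obtain ⟨s, hs⟩ := Finset.card_pos.1 hInpos
    have hsmem := hs
    rw [InSet, Finset.mem_filter] at hs
    obtain ⟨-, hs1, hs2⟩ := hs
    rw [hs1] at hs2
    have hfull := (claimA I M M' hM hM' s b hs1 hs2).1
    have hInTempty : OutSet I M' M b = ∅ := by
      have h0 : InSet I M' M b = ∅ := by
        rw [← Finset.not_nonempty_iff_eq_empty]
        intro hne
        exact noBoth I M M' hM hM' b ⟨s, hsmem⟩ hne
      have := cardEq I M' M hM' hM b
      rw [h0, Finset.card_empty] at this
      exact Finset.card_eq_zero.1 this.symm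
    intro x hx y hy hyn
    rcases hx with ⟨x', rfl, hx'⟩ | ⟨rfl, hslack⟩
    · rcases hy with ⟨y', rfl, hy'⟩ | ⟨rfl, hslackM'⟩
      · have hy'ne : M.toFun y' ≠ some b := by
          intro h
          exact hyn (Or.inl ⟨y', rfl, h⟩)
        have hy'pref : I.prefA y' (some b) (M.toFun y') := by
          have hne2 : M.toFun y' ≠ M'.toFun y' := by rw [hy']; exact hy'ne
          rcases triA I y' hne2 with h | h
          · exfalso
            have : y' ∈ OutSet I M' M b := by
              rw [OutSet, Finset.mem_filter]
              exact ⟨Finset.mem_univ y', hy', h⟩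
            rw [hInTempty] at this
            exact absurd this (Finset.notMem_empty y')
          · rw [hy'] at h; exact h
        exact (claimA I M M' hM hM' y' b hy' hy'pref).2 x' hx'
      · have hns : ¬ I.prefB b none (some x') := fun hp => hM.2.2 ⟨b, x', hx', hp⟩
        rcases triB I b (x := (some x' : Option A)) (y := none) (by simp) with h | h
        · exact h
        · exact absurd h hns
    · exact absurd hslack (not_lt_of_ge hfull)

end SM
end
end
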